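/- arXiv:2009.14267 — 5 statements merged into one kernel-verified Lean document; each statement's English description precedes it below -/
import Mathlib

section
/- Let ζ = (ζ_k)_{k≥1} be a square-summable sequence of complex numbers, i.e. Σ_{k≥1} |ζ_k|² < ∞. Then the sequences of polynomials (c_N)_{N≥0} and (d_N)_{N≥0} converge, uniformly on every compact subset of the open unit disc 𝔻 = {z ∈ ℂ : |z| < 1}, to holomorphic functions c, d : 𝔻 → ℂ. -/
open Polynomial

/-- The pair of polynomials `(c_N, d_N)` arising as the bottom-row entries of the partial
products in root subgroup factorization:  `c_0 = 0`, `d_0 = 1`, and for `N ≥ 1`,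
`c_N = (1+|ζ_N|²)^{-1/2} (c_{N-1} − conj(ζ_N) ∑_k conj((d_{N-1})_k) z^{N-k})`,
`d_N = (1+|ζ_N|²)^{-1/2} (d_{N-1} + conj(ζ_N) ∑_k conj((c_{N-1})_k) z^{N-k})`.
Here `ζ k` for `k ≥ 1` are the root subgroup parameters (the value `ζ 0` is unused). -/
noncomputable def cdPair (ζ : ℕ → ℂ) : ℕ → Polynomial ℂ × Polynomial ℂ
  | 0 => (0, 1)
  | (N + 1) =>
    let c := (cdPair ζ N).1
    let d := (cdPair ζ N).2
    let a : ℂ := ((Real.sqrt (1 + ‖ζ (N + 1)‖ ^ 2))⁻¹ : ℝ)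
    (Polynomial.C a * (c - Polynomial.C (starRingEnd ℂ (ζ (N + 1))) *
        ∑ k ∈ Finset.range (N + 1),
          Polynomial.C (starRingEnd ℂ (d.coeff k)) * Polynomial.X ^ (N + 1 - k)),
     Polynomial.C a * (d + Polynomial.C (starRingEnd ℂ (ζ (N + 1))) *
        ∑ k ∈ Finset.range (N + 1),
          Polynomial.C (starRingEnd ℂ (c.coeff k)) * Polynomial.X ^ (N + 1 - k)))

namespace CdAux

noncomputable def aa (ζ : ℕ → ℂ) (N : ℕ) : ℝ := (Real.sqrt (1 + ‖ζ N‖ ^ 2))⁻¹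

lemma cdPair_succ_fst (ζ : ℕ → ℂ) (N : ℕ) :
    (cdPair ζ N.succ).1 = C ((aa ζ (N+1) : ℝ) : ℂ) * ((cdPair ζ N).1 -
      C (starRingEnd ℂ (ζ (N + 1))) *
        ∑ k ∈ Finset.range (N + 1),
          C (starRingEnd ℂ ((cdPair ζ N).2.coeff k)) * X ^ (N + 1 - k)) := rfl

lemma cdPair_succ_snd (ζ : ℕ → ℂ) (N : ℕ) :
    (cdPair ζ N.succ).2 = C ((aa ζ (N+1) : ℝ) : ℂ) * ((cdPair ζ N).2 +
      C (starRingEnd ℂ (ζ (N + 1))) *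
        ∑ k ∈ Finset.range (N + 1),
          C (starRingEnd ℂ ((cdPair ζ N).1.coeff k)) * X ^ (N + 1 - k)) := rfl

lemma natDeg (ζ : ℕ → ℂ) (N : ℕ) :
    (cdPair ζ N).1.natDegree ≤ N ∧ (cdPair ζ N).2.natDegree ≤ N := by
  induction N with
  | zero => constructor <;> simp [cdPair]
  | succ N ih =>
    have hsum : ∀ (w : ℕ → ℂ),
        (∑ k ∈ Finset.range (N + 1), C (w k) * X ^ (N + 1 - k)).natDegree ≤ N + 1 := by
      intro w
      apply Polynomial.natDegree_sum_le_of_forall_le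
      intro k hk
      calc (C (w k) * X ^ (N+1-k)).natDegree ≤ (C (w k)).natDegree + (X ^ (N+1-k) : ℂ[X]).natDegree :=
            natDegree_mul_le
        _ ≤ N + 1 := by simp only [natDegree_C, natDegree_X_pow, zero_add]; omega
    constructor
    · rw [cdPair_succ_fst]
      calc _ ≤ (C ((aa ζ (N+1) : ℝ) : ℂ)).natDegree + _ := natDegree_mul_le
        _ ≤ N + 1 := by
          simp only [natDegree_C, zero_add]
          apply le_trans (natDegree_sub_le _ _)
          simp only [max_le_iff]
          refine ⟨le_trans ih.1 (by omega), ?_⟩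
          apply le_trans natDegree_mul_le
          simp only [natDegree_C, zero_add]
          exact hsum _
    · rw [cdPair_succ_snd]
      calc _ ≤ (C ((aa ζ (N+1) : ℝ) : ℂ)).natDegree + _ := natDegree_mul_le
        _ ≤ N + 1 := by
          simp only [natDegree_C, zero_add]
          apply le_trans (natDegree_add_le _ _)
          simp only [max_le_iff]
          refine ⟨le_trans ih.2 (by omega), ?_⟩
          apply le_trans natDegree_mul_le
          simp only [natDegree_C, zero_add]
          exact hsum _

lemma sum_coeff (w : ℕ → ℂ) (N j : ℕ) :
    (∑ k ∈ Finset.range (N+1), C (w k) * X ^ (N+1-k)).coeff j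
      = if 1 ≤ j ∧ j ≤ N+1 then w (N+1-j) else 0 := by
  rw [finset_sum_coeff]
  simp only [coeff_C_mul, coeff_X_pow, mul_ite, mul_one, mul_zero]
  by_cases h : 1 ≤ j ∧ j ≤ N+1
  · rw [if_pos h, Finset.sum_eq_single (N+1-j)]
    · rw [if_pos (by omega)]
    · intro k hk hne
      rw [if_neg]
      simp only [Finset.mem_range] at hk
      omega
    · intro h'
      exfalso; apply h'
      simp only [Finset.mem_range]; omega
  · rw [if_neg h, Finset.sum_eq_zero]
    intro k hk
    rw [if_neg]
    simp only [Finset.mem_range] at hk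
    omega

lemma coeff_fst_succ (ζ : ℕ → ℂ) (N j : ℕ) :
    (cdPair ζ N.succ).1.coeff j = ((aa ζ (N+1) : ℝ) : ℂ) * ((cdPair ζ N).1.coeff j -
      starRingEnd ℂ (ζ (N + 1)) *
        if 1 ≤ j ∧ j ≤ N+1 then starRingEnd ℂ ((cdPair ζ N).2.coeff (N+1-j)) else 0) := by
  rw [cdPair_succ_fst, coeff_C_mul, coeff_sub, coeff_C_mul,
    sum_coeff (fun k => starRingEnd ℂ ((cdPair ζ N).2.coeff k))]

lemma coeff_snd_succ (ζ : ℕ → ℂ) (N j : ℕ) :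
    (cdPair ζ N.succ).2.coeff j = ((aa ζ (N+1) : ℝ) : ℂ) * ((cdPair ζ N).2.coeff j +
      starRingEnd ℂ (ζ (N + 1)) *
        if 1 ≤ j ∧ j ≤ N+1 then starRingEnd ℂ ((cdPair ζ N).1.coeff (N+1-j)) else 0) := by
  rw [cdPair_succ_snd, coeff_C_mul, coeff_add, coeff_C_mul,
    sum_coeff (fun k => starRingEnd ℂ ((cdPair ζ N).1.coeff k))]

end CdAux

namespace CdAux

noncomputable def CC (ζ : ℕ → ℂ) (N : ℕ) (z : ℂ) : ℂ := ((cdPair ζ N).1).eval z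
noncomputable def DD (ζ : ℕ → ℂ) (N : ℕ) (z : ℂ) : ℂ := ((cdPair ζ N).2).eval z
noncomputable def GG (ζ : ℕ → ℂ) (N : ℕ) (z : ℂ) : ℂ :=
  ∑ k ∈ Finset.range (N+1), starRingEnd ℂ ((cdPair ζ N).2.coeff k) * z ^ (N-k)
noncomputable def HH (ζ : ℕ → ℂ) (N : ℕ) (z : ℂ) : ℂ :=
  ∑ k ∈ Finset.range (N+1), starRingEnd ℂ ((cdPair ζ N).1.coeff k) * z ^ (N-k)

lemma CC_zero (ζ : ℕ → ℂ) (z : ℂ) : CC ζ 0 z = 0 := by simp [CC, cdPair]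
lemma DD_zero (ζ : ℕ → ℂ) (z : ℂ) : DD ζ 0 z = 1 := by simp [DD, cdPair]

lemma shift_sum (v : ℕ → ℂ) (N : ℕ) (z : ℂ) :
    ∑ k ∈ Finset.range (N+1), v k * z ^ (N+1-k)
      = z * ∑ k ∈ Finset.range (N+1), v k * z ^ (N-k) := by
  rw [Finset.mul_sum]
  apply Finset.sum_congr rfl
  intro k hk
  simp only [Finset.mem_range] at hk
  have h : N+1-k = (N-k)+1 := by omega
  rw [h, pow_succ]; ring

lemma CC_succ (ζ : ℕ → ℂ) (N : ℕ) (z : ℂ) :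
    CC ζ (N+1) z = ((aa ζ (N+1) : ℝ) : ℂ) *
      (CC ζ N z - starRingEnd ℂ (ζ (N+1)) * (z * GG ζ N z)) := by
  show ((cdPair ζ N.succ).1).eval z = _
  rw [cdPair_succ_fst]
  simp only [eval_mul, eval_sub, eval_C, eval_finset_sum, eval_pow, eval_X]
  rw [shift_sum (fun k => starRingEnd ℂ ((cdPair ζ N).2.coeff k)) N z]
  rfl

lemma DD_succ (ζ : ℕ → ℂ) (N : ℕ) (z : ℂ) :
    DD ζ (N+1) z = ((aa ζ (N+1) : ℝ) : ℂ) *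
      (DD ζ N z + starRingEnd ℂ (ζ (N+1)) * (z * HH ζ N z)) := by
  show ((cdPair ζ N.succ).2).eval z = _
  rw [cdPair_succ_snd]
  simp only [eval_mul, eval_add, eval_C, eval_finset_sum, eval_pow, eval_X]
  rw [shift_sum (fun k => starRingEnd ℂ ((cdPair ζ N).1.coeff k)) N z]
  rfl

lemma GG_succ (ζ : ℕ → ℂ) (N : ℕ) (z : ℂ) :
    GG ζ (N+1) z = ((aa ζ (N+1) : ℝ) : ℂ) * (z * GG ζ N z + ζ (N+1) * CC ζ N z) := by
  unfold GG
  have hconj : ∀ k, starRingEnd ℂ ((cdPair ζ (N+1)).2.coeff k)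
      = ((aa ζ (N+1) : ℝ) : ℂ) * (starRingEnd ℂ ((cdPair ζ N).2.coeff k) +
          ζ (N+1) * if 1 ≤ k ∧ k ≤ N+1 then (cdPair ζ N).1.coeff (N+1-k) else 0) := by
    intro k
    rw [coeff_snd_succ ζ N k, map_mul, map_add, map_mul]
    simp only [Complex.conj_ofReal, RingHom.id_apply, Complex.conj_conj]
    rw [apply_ite (starRingEnd ℂ), Complex.conj_conj, map_zero]
  calc ∑ k ∈ Finset.range (N+1+1), starRingEnd ℂ ((cdPair ζ (N+1)).2.coeff k) * z ^ (N+1-k)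
      = ((aa ζ (N+1) : ℝ) : ℂ) *
        ((∑ k ∈ Finset.range (N+2), starRingEnd ℂ ((cdPair ζ N).2.coeff k) * z ^ (N+1-k)) +
         ζ (N+1) * ∑ k ∈ Finset.range (N+2),
           (if 1 ≤ k ∧ k ≤ N+1 then (cdPair ζ N).1.coeff (N+1-k) else 0) * z ^ (N+1-k)) := by
        simp only [mul_add, Finset.mul_sum, ← Finset.sum_add_distrib]
        apply Finset.sum_congr rfl
        intro k hk
        rw [hconj k]
        ring
    _ = _ := by
        congr 1
        have h1 : ∑ k ∈ Finset.range (N+2), starRingEnd ℂ ((cdPair ζ N).2.coeff k) * z ^ (N+1-k)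
            = z * GG ζ N z := by
          rw [Finset.sum_range_succ]
          rw [Polynomial.coeff_eq_zero_of_natDegree_lt (lt_of_le_of_lt (natDeg ζ N).2 (by omega))]
          simp only [map_zero, zero_mul, add_zero]
          exact shift_sum (fun k => starRingEnd ℂ ((cdPair ζ N).2.coeff k)) N z
        have h2 : ∑ k ∈ Finset.range (N+2),
            (if 1 ≤ k ∧ k ≤ N+1 then (cdPair ζ N).1.coeff (N+1-k) else 0) * z ^ (N+1-k)
            = CC ζ N z := by
          rw [Finset.sum_range_succ']
          rw [if_neg (show ¬(1 ≤ 0 ∧ 0 ≤ N+1) by omega), zero_mul, add_zero]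
          have h3 : ∀ k ∈ Finset.range (N+1),
              (if 1 ≤ k+1 ∧ k+1 ≤ N+1 then (cdPair ζ N).1.coeff (N+1-(k+1)) else 0) * z ^ (N+1-(k+1))
              = (cdPair ζ N).1.coeff (N-k) * z ^ (N-k) := by
            intro k hk
            simp only [Finset.mem_range] at hk
            rw [if_pos (show 1 ≤ k+1 ∧ k+1 ≤ N+1 by omega)]
            have he : N+1-(k+1) = N-k := by omega
            rw [he]
          rw [Finset.sum_congr rfl h3]
          have h4 := Finset.sum_range_reflect (fun j => (cdPair ζ N).1.coeff j * z ^ j) (N+1)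
          simp only [Nat.add_sub_cancel] at h4
          rw [h4]
          exact (Polynomial.eval_eq_sum_range' (lt_of_le_of_lt (natDeg ζ N).1 (Nat.lt_succ_self N)) z).symm
        rw [h1, h2]
        rfl

lemma HH_succ (ζ : ℕ → ℂ) (N : ℕ) (z : ℂ) :
    HH ζ (N+1) z = ((aa ζ (N+1) : ℝ) : ℂ) * (z * HH ζ N z - ζ (N+1) * DD ζ N z) := by
  unfold HH
  have hconj : ∀ k, starRingEnd ℂ ((cdPair ζ (N+1)).1.coeff k)
      = ((aa ζ (N+1) : ℝ) : ℂ) * (starRingEnd ℂ ((cdPair ζ N).1.coeff k) -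
          ζ (N+1) * if 1 ≤ k ∧ k ≤ N+1 then (cdPair ζ N).2.coeff (N+1-k) else 0) := by
    intro k
    rw [coeff_fst_succ ζ N k, map_mul, map_sub, map_mul]
    simp only [Complex.conj_ofReal, Complex.conj_conj]
    rw [apply_ite (starRingEnd ℂ), Complex.conj_conj, map_zero]
  calc ∑ k ∈ Finset.range (N+1+1), starRingEnd ℂ ((cdPair ζ (N+1)).1.coeff k) * z ^ (N+1-k)
      = ((aa ζ (N+1) : ℝ) : ℂ) *
        ((∑ k ∈ Finset.range (N+2), starRingEnd ℂ ((cdPair ζ N).1.coeff k) * z ^ (N+1-k)) -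
         ζ (N+1) * ∑ k ∈ Finset.range (N+2),
           (if 1 ≤ k ∧ k ≤ N+1 then (cdPair ζ N).2.coeff (N+1-k) else 0) * z ^ (N+1-k)) := by
        simp only [mul_sub, Finset.mul_sum, ← Finset.sum_sub_distrib]
        apply Finset.sum_congr rfl
        intro k hk
        rw [hconj k]
        ring
    _ = _ := by
        congr 1
        have h1 : ∑ k ∈ Finset.range (N+2), starRingEnd ℂ ((cdPair ζ N).1.coeff k) * z ^ (N+1-k)
            = z * HH ζ N z := by
          rw [Finset.sum_range_succ]
          rw [Polynomial.coeff_eq_zero_of_natDegree_lt (lt_of_le_of_lt (natDeg ζ N).1 (by omega))]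
          simp only [map_zero, zero_mul, add_zero]
          exact shift_sum (fun k => starRingEnd ℂ ((cdPair ζ N).1.coeff k)) N z
        have h2 : ∑ k ∈ Finset.range (N+2),
            (if 1 ≤ k ∧ k ≤ N+1 then (cdPair ζ N).2.coeff (N+1-k) else 0) * z ^ (N+1-k)
            = DD ζ N z := by
          rw [Finset.sum_range_succ']
          rw [if_neg (show ¬(1 ≤ 0 ∧ 0 ≤ N+1) by omega), zero_mul, add_zero]
          have h3 : ∀ k ∈ Finset.range (N+1),
              (if 1 ≤ k+1 ∧ k+1 ≤ N+1 then (cdPair ζ N).2.coeff (N+1-(k+1)) else 0) * z ^ (N+1-(k+1))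
              = (cdPair ζ N).2.coeff (N-k) * z ^ (N-k) := by
            intro k hk
            simp only [Finset.mem_range] at hk
            rw [if_pos (show 1 ≤ k+1 ∧ k+1 ≤ N+1 by omega)]
            have he : N+1-(k+1) = N-k := by omega
            rw [he]
          rw [Finset.sum_congr rfl h3]
          have h4 := Finset.sum_range_reflect (fun j => (cdPair ζ N).2.coeff j * z ^ j) (N+1)
          simp only [Nat.add_sub_cancel] at h4
          rw [h4]
          exact (Polynomial.eval_eq_sum_range' (lt_of_le_of_lt (natDeg ζ N).2 (Nat.lt_succ_self N)) z).symm
        rw [h1, h2]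
        rfl

lemma aa_nonneg (ζ : ℕ → ℂ) (N : ℕ) : 0 ≤ aa ζ N := by
  unfold aa
  exact inv_nonneg.mpr (Real.sqrt_nonneg _)

lemma aa_le_one (ζ : ℕ → ℂ) (N : ℕ) : aa ζ N ≤ 1 := by
  unfold aa
  rw [inv_le_one_iff₀]
  right
  exact Real.one_le_sqrt.mpr (by nlinarith [sq_nonneg ‖ζ N‖])

lemma one_sub_aa (ζ : ℕ → ℂ) (N : ℕ) : 1 - aa ζ N ≤ ‖ζ N‖^2 := by
  unfold aa
  set t := ‖ζ N‖ with ht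
  have ht0 : 0 ≤ t := norm_nonneg _
  have h1 : (1:ℝ) ≤ 1 + t^2 := by nlinarith
  have hpos : (0:ℝ) < 1 + t^2 := by nlinarith
  have h2 : Real.sqrt (1 + t^2) ≤ 1 + t^2 := by
    rw [Real.sqrt_le_left hpos.le]
    nlinarith
  have h3 : (1 + t^2)⁻¹ ≤ (Real.sqrt (1 + t^2))⁻¹ := by
    apply inv_anti₀ _ h2
    rw [show (0:ℝ) = Real.sqrt 0 by simp]
    exact Real.sqrt_lt_sqrt le_rfl hpos
  have h4 : 1 - t^2 ≤ (1 + t^2)⁻¹ := by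
    nlinarith [inv_mul_cancel₀ (ne_of_gt hpos), inv_pos.mpr hpos, sq_nonneg (t^2)]
  linarith

noncomputable def pp (ζ : ℕ → ℂ) (r : ℝ) : ℕ → ℝ × ℝ
  | 0 => (1, 1)
  | (N+1) => ((pp ζ r N).1 + ‖ζ (N+1)‖ * (pp ζ r N).2,
              r * (pp ζ r N).2 + ‖ζ (N+1)‖ * (pp ζ r N).1)

noncomputable def sig (ζ : ℕ → ℂ) (r : ℝ) : ℕ → ℝ
  | 0 => 0
  | (N+1) => r * sig ζ r N + ‖ζ (N+1)‖

noncomputable def tau (ζ : ℕ → ℂ) (r : ℝ) : ℕ → ℝ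
  | 0 => 0
  | (N+1) => r * tau ζ r N + ‖ζ (N+1)‖^2

lemma pp_pos (ζ : ℕ → ℂ) (r : ℝ) (hr0 : 0 ≤ r) (N : ℕ) :
    1 ≤ (pp ζ r N).1 ∧ 0 ≤ (pp ζ r N).2 := by
  induction N with
  | zero => exact ⟨le_refl 1, zero_le_one⟩
  | succ N ih =>
    have ht : 0 ≤ ‖ζ (N+1)‖ := norm_nonneg _
    constructor
    · show 1 ≤ (pp ζ r N).1 + ‖ζ (N+1)‖ * (pp ζ r N).2
      nlinarith [ih.1, ih.2]
    · show 0 ≤ r * (pp ζ r N).2 + ‖ζ (N+1)‖ * (pp ζ r N).1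
      nlinarith [ih.1, ih.2]

lemma sig_nonneg (ζ : ℕ → ℂ) (r : ℝ) (hr0 : 0 ≤ r) (N : ℕ) : 0 ≤ sig ζ r N := by
  induction N with
  | zero => exact le_refl 0
  | succ N ih =>
    show 0 ≤ r * sig ζ r N + ‖ζ (N+1)‖
    have := norm_nonneg (ζ (N+1))
    nlinarith

lemma tau_nonneg (ζ : ℕ → ℂ) (r : ℝ) (hr0 : 0 ≤ r) (N : ℕ) : 0 ≤ tau ζ r N := by
  induction N with
  | zero => exact le_refl 0
  | succ N ih =>
    show 0 ≤ r * tau ζ r N + ‖ζ (N+1)‖^2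
    nlinarith [sq_nonneg ‖ζ (N+1)‖]

lemma norm_aa (ζ : ℕ → ℂ) (N : ℕ) : ‖((aa ζ N : ℝ) : ℂ)‖ = aa ζ N := by
  rw [Complex.norm_real, Real.norm_eq_abs, abs_of_nonneg (aa_nonneg ζ N)]

lemma norm_conj' (w : ℂ) : ‖(starRingEnd ℂ) w‖ = ‖w‖ := RCLike.norm_conj w

lemma cdBound (ζ : ℕ → ℂ) (r : ℝ) (hr0 : 0 ≤ r) (hr1 : r ≤ 1) (N : ℕ) (z : ℂ)
    (hz : ‖z‖ ≤ r) :
    ‖CC ζ N z‖ ≤ (pp ζ r N).1 ∧ ‖DD ζ N z‖ ≤ (pp ζ r N).1 ∧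
      ‖GG ζ N z‖ ≤ (pp ζ r N).2 ∧ ‖HH ζ N z‖ ≤ (pp ζ r N).2 := by
  induction N with
  | zero =>
    refine ⟨?_, ?_, ?_, ?_⟩
    · rw [CC_zero]; simp [pp]
    · rw [DD_zero]; simp [pp]
    · show ‖GG ζ 0 z‖ ≤ 1
      unfold GG
      simp [cdPair]
    · show ‖HH ζ 0 z‖ ≤ 1
      unfold HH
      simp [cdPair]
  | succ N ih =>
    obtain ⟨hC, hD, hG, hH⟩ := ih
    set t := ‖ζ (N+1)‖ with htdef
    have ht0 : 0 ≤ t := norm_nonneg _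
    have ha1 : ‖((aa ζ (N+1) : ℝ) : ℂ)‖ ≤ 1 := by rw [norm_aa]; exact aa_le_one ζ (N+1)
    have ha0 : 0 ≤ ‖((aa ζ (N+1) : ℝ) : ℂ)‖ := norm_nonneg _
    have hp1 := (pp_pos ζ r hr0 N).1
    have hq0 := (pp_pos ζ r hr0 N).2
    have hzG : ‖z * GG ζ N z‖ ≤ r * (pp ζ r N).2 := by
      rw [norm_mul]
      exact mul_le_mul hz hG (norm_nonneg _) hr0
    have hzH : ‖z * HH ζ N z‖ ≤ r * (pp ζ r N).2 := by
      rw [norm_mul]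
      exact mul_le_mul hz hH (norm_nonneg _) hr0
    refine ⟨?_, ?_, ?_, ?_⟩
    · show ‖CC ζ (N+1) z‖ ≤ (pp ζ r N).1 + t * (pp ζ r N).2
      rw [CC_succ, norm_mul]
      calc ‖((aa ζ (N+1) : ℝ) : ℂ)‖ * ‖CC ζ N z - starRingEnd ℂ (ζ (N+1)) * (z * GG ζ N z)‖
          ≤ 1 * (‖CC ζ N z‖ + ‖starRingEnd ℂ (ζ (N+1))‖ * ‖z * GG ζ N z‖) := by
            apply mul_le_mul ha1 _ (norm_nonneg _) zero_le_one
            exact le_trans (norm_sub_le _ _) (by rw [norm_mul])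
        _ ≤ (pp ζ r N).1 + t * (pp ζ r N).2 := by
            rw [one_mul, norm_conj']
            have : ‖ζ (N+1)‖ * ‖z * GG ζ N z‖ ≤ t * (r * (pp ζ r N).2) :=
              mul_le_mul_of_nonneg_left hzG ht0
            nlinarith [mul_nonneg (mul_nonneg ht0 hq0) (by linarith : (0:ℝ) ≤ 1 - r)]
    · show ‖DD ζ (N+1) z‖ ≤ (pp ζ r N).1 + t * (pp ζ r N).2
      rw [DD_succ, norm_mul]
      calc ‖((aa ζ (N+1) : ℝ) : ℂ)‖ * ‖DD ζ N z + starRingEnd ℂ (ζ (N+1)) * (z * HH ζ N z)‖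
          ≤ 1 * (‖DD ζ N z‖ + ‖starRingEnd ℂ (ζ (N+1))‖ * ‖z * HH ζ N z‖) := by
            apply mul_le_mul ha1 _ (norm_nonneg _) zero_le_one
            exact le_trans (norm_add_le _ _) (by rw [norm_mul])
        _ ≤ (pp ζ r N).1 + t * (pp ζ r N).2 := by
            rw [one_mul, norm_conj']
            have : ‖ζ (N+1)‖ * ‖z * HH ζ N z‖ ≤ t * (r * (pp ζ r N).2) :=
              mul_le_mul_of_nonneg_left hzH ht0
            nlinarith [mul_nonneg (mul_nonneg ht0 hq0) (by linarith : (0:ℝ) ≤ 1 - r)]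
    · show ‖GG ζ (N+1) z‖ ≤ r * (pp ζ r N).2 + t * (pp ζ r N).1
      rw [GG_succ, norm_mul]
      calc ‖((aa ζ (N+1) : ℝ) : ℂ)‖ * ‖z * GG ζ N z + ζ (N+1) * CC ζ N z‖
          ≤ 1 * (‖z‖ * ‖GG ζ N z‖ + ‖ζ (N+1)‖ * ‖CC ζ N z‖) := by
            apply mul_le_mul ha1 _ (norm_nonneg _) zero_le_one
            exact le_trans (norm_add_le _ _) (by simp [norm_mul])
        _ ≤ r * (pp ζ r N).2 + t * (pp ζ r N).1 := by
            rw [one_mul]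
            have h1 : ‖ζ (N+1)‖ * ‖CC ζ N z‖ ≤ t * (pp ζ r N).1 :=
              mul_le_mul_of_nonneg_left hC ht0
            have h2 : ‖z‖ * ‖GG ζ N z‖ ≤ r * (pp ζ r N).2 :=
              mul_le_mul hz hG (norm_nonneg _) hr0
            linarith
    · show ‖HH ζ (N+1) z‖ ≤ r * (pp ζ r N).2 + t * (pp ζ r N).1
      rw [HH_succ, norm_mul]
      calc ‖((aa ζ (N+1) : ℝ) : ℂ)‖ * ‖z * HH ζ N z - ζ (N+1) * DD ζ N z‖
          ≤ 1 * (‖z‖ * ‖HH ζ N z‖ + ‖ζ (N+1)‖ * ‖DD ζ N z‖) := by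
            apply mul_le_mul ha1 _ (norm_nonneg _) zero_le_one
            exact le_trans (norm_sub_le _ _) (by simp [norm_mul])
        _ ≤ r * (pp ζ r N).2 + t * (pp ζ r N).1 := by
            rw [one_mul]
            have h1 : ‖ζ (N+1)‖ * ‖DD ζ N z‖ ≤ t * (pp ζ r N).1 :=
              mul_le_mul_of_nonneg_left hD ht0
            have h2 : ‖z‖ * ‖HH ζ N z‖ ≤ r * (pp ζ r N).2 :=
              mul_le_mul hz hH (norm_nonneg _) hr0
            linarith

lemma energy_step (p q t r K : ℝ) (hp : 0 ≤ p) (hq : 0 ≤ q) (ht : 0 ≤ t)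
    (hr0 : 0 ≤ r) (hr1 : r < 1) (hK : (K - 1) * (1 - r) = 4) :
    (p + t*q)^2 + (r*q + t*p)^2 ≤ (1 + K*t^2) * (p^2 + q^2) := by
  have h1r : (0:ℝ) < 1 - r := by linarith
  have hsq := sq_nonneg ((1+r)*t*p - (1-r)*q)
  have e1 : (0:ℝ) ≤ (1-r)*(3+r) * (t*p)^2 :=
    mul_nonneg (mul_nonneg h1r.le (by linarith)) (sq_nonneg _)
  have e2 : (0:ℝ) ≤ r*(1-r)^2 * q^2 :=
    mul_nonneg (mul_nonneg hr0 (sq_nonneg _)) (sq_nonneg _)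
  have e3 : (0:ℝ) ≤ 4*(t*q)^2 := by positivity
  have hscaled : (1-r)*(2*t*(1+r)*p*q) ≤ (1-r)*((1-r^2)*q^2) + 4*(t^2*(p^2+q^2)) := by
    nlinarith [hsq, e1, e2, e3]
  have hKt : (1-r)*((K-1)*(t^2*(p^2+q^2))) = 4*(t^2*(p^2+q^2)) := by
    rw [show (1-r)*((K-1)*(t^2*(p^2+q^2))) = ((K-1)*(1-r))*(t^2*(p^2+q^2)) by ring, hK]
  have h2 : (1-r) * (2*t*(1+r)*p*q) ≤ (1-r) * ((1-r^2)*q^2 + (K-1)*(t^2*(p^2+q^2))) := by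
    rw [mul_add (1-r) ((1-r^2)*q^2) ((K-1)*(t^2*(p^2+q^2))), hKt]
    exact hscaled
  have key : 2*t*(1+r)*p*q ≤ (1-r^2)*q^2 + (K-1)*(t^2*(p^2+q^2)) :=
    le_of_mul_le_mul_left (by linarith [h2]) h1r
  nlinarith [key]

lemma sigtau (ζ : ℕ → ℂ) (r : ℝ) (hr0 : 0 ≤ r) (hr1 : r < 1) (N : ℕ) :
    (1 - r) * (sig ζ r N)^2 ≤ tau ζ r N := by
  induction N with
  | zero => simp [sig, tau]
  | succ N ih =>
    show (1 - r) * (r * sig ζ r N + ‖ζ (N+1)‖)^2 ≤ r * tau ζ r N + ‖ζ (N+1)‖^2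
    have hs := sig_nonneg ζ r hr0 N
    nlinarith [mul_nonneg hr0 (sq_nonneg ((1-r) * sig ζ r N - ‖ζ (N+1)‖)),
      mul_le_mul_of_nonneg_left ih hr0]

noncomputable def climit (ζ : ℕ → ℂ) : ℂ → ℂ := fun z => ∑' N, (CC ζ (N+1) z - CC ζ N z)
noncomputable def dlimit (ζ : ℕ → ℂ) : ℂ → ℂ := fun z => 1 + ∑' N, (DD ζ (N+1) z - DD ζ N z)

lemma key (ζ : ℕ → ℂ) (hζ : Summable fun k : ℕ => ‖ζ (k + 1)‖ ^ 2)
    (r : ℝ) (hr0 : 0 ≤ r) (hr1 : r < 1) :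
    TendstoUniformlyOn (CC ζ) (climit ζ) Filter.atTop (Metric.closedBall 0 r) ∧
    TendstoUniformlyOn (DD ζ) (dlimit ζ) Filter.atTop (Metric.closedBall 0 r) := by
  have h1r : (0:ℝ) < 1 - r := by linarith
  set S := ∑' k, ‖ζ (k+1)‖^2 with hSdef
  have hS0 : 0 ≤ S := tsum_nonneg (fun k => sq_nonneg _)
  have hpartS : ∀ M, ∑ j ∈ Finset.range M, ‖ζ (j+1)‖^2 ≤ S :=
    fun M => Summable.sum_le_tsum _ (fun i _ => sq_nonneg _) hζ
  set K := 1 + 4/(1-r) with hKdef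
  have hK : (K - 1) * (1 - r) = 4 := by
    rw [hKdef]; field_simp; ring
  have hK0 : 0 ≤ K := by
    rw [hKdef]; positivity
  set B := Real.sqrt (2 * Real.exp (K*S)) with hBdef
  have hBsq : B^2 = 2 * Real.exp (K*S) := Real.sq_sqrt (by positivity)
  have hB1 : 1 ≤ B := by
    rw [hBdef]
    exact Real.one_le_sqrt.mpr (by nlinarith [Real.one_le_exp (mul_nonneg hK0 hS0)])
  have hB0 : (0:ℝ) ≤ B := le_trans zero_le_one hB1
  have hE : ∀ N, (pp ζ r N).1^2 + (pp ζ r N).2^2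
      ≤ 2 * Real.exp (K * ∑ j ∈ Finset.range N, ‖ζ (j+1)‖^2) := by
    intro N
    induction N with
    | zero =>
      simp only [Finset.range_zero, Finset.sum_empty, mul_zero, Real.exp_zero, mul_one]
      show (1:ℝ)^2 + (1:ℝ)^2 ≤ 2
      norm_num
    | succ N ih =>
      have hstep := energy_step (pp ζ r N).1 (pp ζ r N).2 ‖ζ (N+1)‖ r K
        (le_trans zero_le_one (pp_pos ζ r hr0 N).1) (pp_pos ζ r hr0 N).2 (norm_nonneg _)
        hr0 hr1 hK
      have hexp : 1 + K*‖ζ (N+1)‖^2 ≤ Real.exp (K*‖ζ (N+1)‖^2) := by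
        linarith [Real.add_one_le_exp (K*‖ζ (N+1)‖^2)]
      calc (pp ζ r (N+1)).1^2 + (pp ζ r (N+1)).2^2
          = ((pp ζ r N).1 + ‖ζ (N+1)‖*(pp ζ r N).2)^2
            + (r*(pp ζ r N).2 + ‖ζ (N+1)‖*(pp ζ r N).1)^2 := rfl
        _ ≤ (1 + K*‖ζ (N+1)‖^2) * ((pp ζ r N).1^2 + (pp ζ r N).2^2) := hstep
        _ ≤ Real.exp (K*‖ζ (N+1)‖^2) * (2 * Real.exp (K * ∑ j ∈ Finset.range N, ‖ζ (j+1)‖^2)) := by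
            apply mul_le_mul hexp ih (by positivity) (Real.exp_pos _).le
        _ = 2 * Real.exp (K * ∑ j ∈ Finset.range (N+1), ‖ζ (j+1)‖^2) := by
            rw [Finset.sum_range_succ, mul_add, Real.exp_add]; ring
  have hEB : ∀ N, (pp ζ r N).1^2 + (pp ζ r N).2^2 ≤ B^2 := by
    intro N
    rw [hBsq]
    refine le_trans (hE N) ?_
    have h1 : K * ∑ j ∈ Finset.range N, ‖ζ (j+1)‖^2 ≤ K * S :=
      mul_le_mul_of_nonneg_left (hpartS N) hK0
    have h2 := Real.exp_le_exp.mpr h1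
    linarith
  have hpB : ∀ N, (pp ζ r N).1 ≤ B := by
    intro N
    nlinarith [hEB N, (pp_pos ζ r hr0 N).1, (pp_pos ζ r hr0 N).2, sq_nonneg (pp ζ r N).2, hB0]
  have hqB : ∀ N, (pp ζ r N).2 ≤ B := by
    intro N
    nlinarith [hEB N, (pp_pos ζ r hr0 N).1, (pp_pos ζ r hr0 N).2, hB0]
  have hq_sig : ∀ N, (pp ζ r N).2 ≤ B * (r^N + sig ζ r N) := by
    intro N
    induction N with
    | zero =>
      show (1:ℝ) ≤ B * ((1:ℝ) + 0)
      simpa using hB1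
    | succ N ih =>
      show r * (pp ζ r N).2 + ‖ζ (N+1)‖ * (pp ζ r N).1
        ≤ B * (r^(N+1) + (r * sig ζ r N + ‖ζ (N+1)‖))
      have h1 : r * (pp ζ r N).2 ≤ r * (B * (r^N + sig ζ r N)) :=
        mul_le_mul_of_nonneg_left ih hr0
      have h2 : ‖ζ (N+1)‖ * (pp ζ r N).1 ≤ ‖ζ (N+1)‖ * B :=
        mul_le_mul_of_nonneg_left (hpB N) (norm_nonneg _)
      have h3 : B * (r^(N+1) + (r * sig ζ r N + ‖ζ (N+1)‖))
          = r * (B * (r^N + sig ζ r N)) + ‖ζ (N+1)‖ * B := by ring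
      rw [h3]
      linarith
  have htsum : ∀ M, ∑ N ∈ Finset.range M, tau ζ r N ≤ S / (1-r) := by
    intro M
    match M with
    | 0 => simp only [Finset.range_zero, Finset.sum_empty]; positivity
    | (M+1) =>
      have h0 : ∑ N ∈ Finset.range (M+1), tau ζ r N
          = ∑ N ∈ Finset.range M, tau ζ r (N+1) + tau ζ r 0 := Finset.sum_range_succ' _ M
      have h1 : ∑ N ∈ Finset.range M, tau ζ r (N+1)
          = r * ∑ N ∈ Finset.range M, tau ζ r N + ∑ N ∈ Finset.range M, ‖ζ (N+1)‖^2 := by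
        rw [Finset.mul_sum, ← Finset.sum_add_distrib]
        rfl
      have h2 : ∑ N ∈ Finset.range M, tau ζ r N ≤ ∑ N ∈ Finset.range (M+1), tau ζ r N := by
        rw [Finset.sum_range_succ]
        linarith [tau_nonneg ζ r hr0 M]
      have h3 : tau ζ r 0 = 0 := rfl
      have h4 : ∑ N ∈ Finset.range (M+1), tau ζ r N
          ≤ r * ∑ N ∈ Finset.range (M+1), tau ζ r N + S := by
        have h5 : ∑ N ∈ Finset.range (M+1), tau ζ r N
            = r * ∑ N ∈ Finset.range M, tau ζ r N + ∑ N ∈ Finset.range M, ‖ζ (N+1)‖^2 := by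
          rw [h0, h1, h3, add_zero]
        have h6 := mul_le_mul_of_nonneg_left h2 hr0
        calc ∑ N ∈ Finset.range (M+1), tau ζ r N
            = r * ∑ N ∈ Finset.range M, tau ζ r N + ∑ N ∈ Finset.range M, ‖ζ (N+1)‖^2 := h5
          _ ≤ r * ∑ N ∈ Finset.range (M+1), tau ζ r N + S := by linarith [hpartS M]
      rw [le_div_iff₀ h1r]
      nlinarith [h4]
  have htauSummable : Summable (tau ζ r) :=
    summable_of_sum_range_le (tau_nonneg ζ r hr0) htsum
  have hgeom : Summable (fun N => (r^N)^2) := by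
    have he : ∀ N, (r^N)^2 = (r^2)^N := fun N => by
      rw [← pow_mul, ← pow_mul, mul_comm]
    simp only [he]
    exact summable_geometric_of_lt_one (by positivity) (by nlinarith)
  set v := fun N => B*(2*‖ζ (N+1)‖^2 + (r^N)^2 + tau ζ r N * (1-r)⁻¹) with hvdef
  have hv : Summable v := by
    apply Summable.mul_left
    exact ((hζ.mul_left 2).add hgeom).add (htauSummable.mul_right _)
  have hdiff : ∀ N, ∀ z ∈ Metric.closedBall (0:ℂ) r,
      ‖CC ζ (N+1) z - CC ζ N z‖ ≤ v N ∧ ‖DD ζ (N+1) z - DD ζ N z‖ ≤ v N := by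
    intro N z hz
    rw [Metric.mem_closedBall, dist_zero_right] at hz
    obtain ⟨hC, hD, hG, hH⟩ := cdBound ζ r hr0 hr1.le N z hz
    have ht0 : (0:ℝ) ≤ ‖ζ (N+1)‖ := norm_nonneg _
    have hs0 := sig_nonneg ζ r hr0 N
    have hτ0 := tau_nonneg ζ r hr0 N
    have hp1 := (pp_pos ζ r hr0 N).1
    have hq0 := (pp_pos ζ r hr0 N).2
    have ha0 := aa_nonneg ζ (N+1)
    have ha1 := aa_le_one ζ (N+1)
    have hamt := one_sub_aa ζ (N+1)
    have hrN0 : (0:ℝ) ≤ r^N := pow_nonneg hr0 N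
    have hσ2 : (sig ζ r N)^2 ≤ tau ζ r N * (1-r)⁻¹ := by
      rw [← div_eq_mul_inv, le_div_iff₀ h1r]
      linarith [sigtau ζ r hr0 hr1 N]
    -- common scalar bound
    have hzGq : ‖z‖ * ‖GG ζ N z‖ ≤ (pp ζ r N).2 := by
      have := mul_le_mul (le_trans hz hr1.le) hG (norm_nonneg _) zero_le_one
      linarith
    have hzHq : ‖z‖ * ‖HH ζ N z‖ ≤ (pp ζ r N).2 := by
      have := mul_le_mul (le_trans hz hr1.le) hH (norm_nonneg _) zero_le_one
      linarith
    have hnorm1 : ‖(((aa ζ (N+1) - 1 : ℝ)):ℂ)‖ ≤ ‖ζ (N+1)‖^2 := by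
      rw [Complex.norm_real, Real.norm_eq_abs, abs_of_nonpos (by linarith)]
      linarith
    have hscal0 : ‖ζ (N+1)‖^2 * (pp ζ r N).1 + ‖ζ (N+1)‖ * (pp ζ r N).2 ≤ v N := by
      have hstep1 : ‖ζ (N+1)‖^2 * (pp ζ r N).1 ≤ ‖ζ (N+1)‖^2 * B :=
        mul_le_mul_of_nonneg_left (hpB N) (sq_nonneg _)
      have hstep2 : ‖ζ (N+1)‖ * (pp ζ r N).2 ≤ ‖ζ (N+1)‖ * (B * (r^N + sig ζ r N)) :=
        mul_le_mul_of_nonneg_left (hq_sig N) ht0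
      have hscalB : ‖ζ (N+1)‖^2 + ‖ζ (N+1)‖ * (r^N + sig ζ r N)
          ≤ 2*‖ζ (N+1)‖^2 + (r^N)^2 + tau ζ r N * (1-r)⁻¹ := by
        nlinarith [sq_nonneg (‖ζ (N+1)‖ - r^N), sq_nonneg (‖ζ (N+1)‖ - sig ζ r N),
          mul_nonneg hτ0 (inv_nonneg.mpr h1r.le)]
      have := mul_le_mul_of_nonneg_left hscalB hB0
      rw [hvdef]
      calc ‖ζ (N+1)‖^2 * (pp ζ r N).1 + ‖ζ (N+1)‖ * (pp ζ r N).2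
          ≤ ‖ζ (N+1)‖^2 * B + ‖ζ (N+1)‖ * (B * (r^N + sig ζ r N)) := by linarith
        _ = B * (‖ζ (N+1)‖^2 + ‖ζ (N+1)‖ * (r^N + sig ζ r N)) := by ring
        _ ≤ B*(2*‖ζ (N+1)‖^2 + (r^N)^2 + tau ζ r N * (1-r)⁻¹) := this
    constructor
    · have e : CC ζ (N+1) z - CC ζ N z
          = (((aa ζ (N+1) - 1 : ℝ)):ℂ) * CC ζ N z
            - ((aa ζ (N+1) : ℝ):ℂ) * (starRingEnd ℂ (ζ (N+1)) * (z * GG ζ N z)) := by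
        rw [CC_succ]
        push_cast
        ring
      rw [e]
      refine le_trans (norm_sub_le _ _) (le_trans ?_ hscal0)
      rw [norm_mul, norm_mul, norm_mul, norm_mul, norm_conj', norm_aa]
      have h1 : ‖(((aa ζ (N+1) - 1 : ℝ)):ℂ)‖ * ‖CC ζ N z‖ ≤ ‖ζ (N+1)‖^2 * (pp ζ r N).1 :=
        mul_le_mul hnorm1 hC (norm_nonneg _) (sq_nonneg _)
      have h2 : aa ζ (N+1) * (‖ζ (N+1)‖ * (‖z‖ * ‖GG ζ N z‖)) ≤ ‖ζ (N+1)‖ * (pp ζ r N).2 := by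
        have h3 : ‖ζ (N+1)‖ * (‖z‖ * ‖GG ζ N z‖) ≤ ‖ζ (N+1)‖ * (pp ζ r N).2 :=
          mul_le_mul_of_nonneg_left hzGq ht0
        have h4 := mul_le_mul_of_nonneg_right ha1
          (mul_nonneg ht0 (mul_nonneg (norm_nonneg z) (norm_nonneg (GG ζ N z))))
        rw [one_mul] at h4
        exact le_trans h4 h3
      linarith
    · have e : DD ζ (N+1) z - DD ζ N z
          = (((aa ζ (N+1) - 1 : ℝ)):ℂ) * DD ζ N z
            + ((aa ζ (N+1) : ℝ):ℂ) * (starRingEnd ℂ (ζ (N+1)) * (z * HH ζ N z)) := by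
        rw [DD_succ]
        push_cast
        ring
      rw [e]
      refine le_trans (norm_add_le _ _) (le_trans ?_ hscal0)
      rw [norm_mul, norm_mul, norm_mul, norm_mul, norm_conj', norm_aa]
      have h1 : ‖(((aa ζ (N+1) - 1 : ℝ)):ℂ)‖ * ‖DD ζ N z‖ ≤ ‖ζ (N+1)‖^2 * (pp ζ r N).1 :=
        mul_le_mul hnorm1 hD (norm_nonneg _) (sq_nonneg _)
      have h2 : aa ζ (N+1) * (‖ζ (N+1)‖ * (‖z‖ * ‖HH ζ N z‖)) ≤ ‖ζ (N+1)‖ * (pp ζ r N).2 := by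
        have h3 : ‖ζ (N+1)‖ * (‖z‖ * ‖HH ζ N z‖) ≤ ‖ζ (N+1)‖ * (pp ζ r N).2 :=
          mul_le_mul_of_nonneg_left hzHq ht0
        have h4 := mul_le_mul_of_nonneg_right ha1
          (mul_nonneg ht0 (mul_nonneg (norm_nonneg z) (norm_nonneg (HH ζ N z))))
        rw [one_mul] at h4
        exact le_trans h4 h3
      linarith
  constructor
  · have hCtend := tendstoUniformlyOn_tsum_nat hv
      (f := fun N z => CC ζ (N+1) z - CC ζ N z) (s := Metric.closedBall (0:ℂ) r)
      (fun N z hz => (hdiff N z hz).1)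
    have hCeq : (fun M (z:ℂ) => ∑ N ∈ Finset.range M, (CC ζ (N+1) z - CC ζ N z)) = CC ζ := by
      funext M z
      rw [Finset.sum_range_sub (fun N => CC ζ N z) M, CC_zero, sub_zero]
    rw [hCeq] at hCtend
    exact hCtend
  · have hDtend := tendstoUniformlyOn_tsum_nat hv
      (f := fun N z => DD ζ (N+1) z - DD ζ N z) (s := Metric.closedBall (0:ℂ) r)
      (fun N z hz => (hdiff N z hz).2)
    have hconst : TendstoUniformlyOn (fun (_:ℕ) (_:ℂ) => (1:ℂ)) (fun _ => (1:ℂ))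
        Filter.atTop (Metric.closedBall (0:ℂ) r) :=
      fun u hu => Filter.Eventually.of_forall (fun n z _ => refl_mem_uniformity hu)
    have hsum := hconst.add hDtend
    have hDeq : ((fun (_:ℕ) (_:ℂ) => (1:ℂ))
        + fun M (z:ℂ) => ∑ N ∈ Finset.range M, (DD ζ (N+1) z - DD ζ N z)) = DD ζ := by
      funext M z
      show 1 + ∑ N ∈ Finset.range M, (DD ζ (N+1) z - DD ζ N z) = DD ζ M z
      rw [Finset.sum_range_sub (fun N => DD ζ N z) M, DD_zero]
      ring
    have hLeq : ((fun (_:ℂ) => (1:ℂ)) + fun z => ∑' N, (DD ζ (N+1) z - DD ζ N z)) = dlimit ζ := by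
      funext z
      rfl
    rw [hDeq, hLeq] at hsum
    exact hsum

end CdAux

/-- If `ζ = (ζ_k)_{k ≥ 1}` is square summable, then the polynomials `c_N` and `d_N`
converge, uniformly on every compact subset of the open unit disc, to holomorphic
functions `c, d` on the disc. -/
theorem stmt0 (ζ : ℕ → ℂ) (hζ : Summable fun k : ℕ => ‖ζ (k + 1)‖ ^ 2) :
    ∃ c d : ℂ → ℂ,
      DifferentiableOn ℂ c (Metric.ball (0 : ℂ) 1) ∧
      DifferentiableOn ℂ d (Metric.ball (0 : ℂ) 1) ∧
      ∀ K : Set ℂ, K ⊆ Metric.ball (0 : ℂ) 1 → IsCompact K →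
        TendstoUniformlyOn (fun N z => ((cdPair ζ N).1).eval z) c Filter.atTop K ∧
        TendstoUniformlyOn (fun N z => ((cdPair ζ N).2).eval z) d Filter.atTop K := by
  have main : ∀ K : Set ℂ, K ⊆ Metric.ball (0:ℂ) 1 → IsCompact K →
      TendstoUniformlyOn (CdAux.CC ζ) (CdAux.climit ζ) Filter.atTop K ∧
      TendstoUniformlyOn (CdAux.DD ζ) (CdAux.dlimit ζ) Filter.atTop K := by
    intro K hK1 hK2
    rcases K.eq_empty_or_nonempty with hKe | hKne
    · subst hKe
      have h := CdAux.key ζ hζ 0 le_rfl zero_lt_one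
      exact ⟨h.1.mono (Set.empty_subset _), h.2.mono (Set.empty_subset _)⟩
    · obtain ⟨x, hxK, hxmax⟩ := hK2.exists_isMaxOn hKne continuous_norm.continuousOn
      rw [isMaxOn_iff] at hxmax
      have hx1 : ‖x‖ < 1 := by
        have := hK1 hxK
        rwa [Metric.mem_ball, dist_zero_right] at this
      have hsub : K ⊆ Metric.closedBall 0 ‖x‖ := fun y hy => by
        rw [Metric.mem_closedBall, dist_zero_right]; exact hxmax y hy
      have h := CdAux.key ζ hζ ‖x‖ (norm_nonneg x) hx1
      exact ⟨h.1.mono hsub, h.2.mono hsub⟩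
  have hCloc : TendstoLocallyUniformlyOn (CdAux.CC ζ) (CdAux.climit ζ)
      Filter.atTop (Metric.ball (0:ℂ) 1) := by
    rw [tendstoLocallyUniformlyOn_iff_forall_isCompact Metric.isOpen_ball]
    exact fun K h1 h2 => (main K h1 h2).1
  have hDloc : TendstoLocallyUniformlyOn (CdAux.DD ζ) (CdAux.dlimit ζ)
      Filter.atTop (Metric.ball (0:ℂ) 1) := by
    rw [tendstoLocallyUniformlyOn_iff_forall_isCompact Metric.isOpen_ball]
    exact fun K h1 h2 => (main K h1 h2).2
  refine ⟨CdAux.climit ζ, CdAux.dlimit ζ, ?_, ?_, ?_⟩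
  · exact hCloc.differentiableOn
      (Filter.Eventually.of_forall fun N => (Polynomial.differentiable _).differentiableOn)
      Metric.isOpen_ball
  · exact hDloc.differentiableOn
      (Filter.Eventually.of_forall fun N => (Polynomial.differentiable _).differentiableOn)
      Metric.isOpen_ball
  · exact main
end

section
/- Let ζ₁, …, ζ_N be complex numbers. Then for every z ∈ ℂ with |z| = 1, the 2×2 matrix product Π_{k=N}^{1} (1+|ζ_k|²)^{-1/2}·[[1, ζ_k z^{-k}],[−conj(ζ_k) z^k, 1]] (factors multiplied with the k = N factor leftmost) equals the matrix [[conj(d_N(z)), −conj(c_N(z))],[c_N(z), d_N(z)]]. Consequently this product lies in SU(2) for every |z| = 1; in particular |c_N(z)|² + |d_N(z)|² = 1 for all |z| = 1, c_N(0) = 0, and d_N(0) = Π_{k=1}^{N} (1+|ζ_k|²)^{-1/2} > 0. -/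
open Polynomial

/-- The `k`-th factor `(1+|ζ_k|²)^{-1/2} [[1, ζ_k z^{-k}], [−conj(ζ_k) z^k, 1]]` of the
partial products of root subgroup factorization, for `|z| = 1` (so `z ≠ 0`). -/
noncomputable def rsFactor (ζ : ℕ → ℂ) (k : ℕ) (z : ℂ) : Matrix (Fin 2) (Fin 2) ℂ :=
  (((Real.sqrt (1 + ‖ζ k‖ ^ 2))⁻¹ : ℝ) : ℂ) •
    !![1, ζ k * z ^ (-(k : ℤ)); -(starRingEnd ℂ (ζ k)) * z ^ (k : ℤ), 1]


lemma cdPair_natDegree (ζ : ℕ → ℂ) (N : ℕ) :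
    (cdPair ζ N).1.natDegree ≤ N ∧ (cdPair ζ N).2.natDegree ≤ N := by
  induction N with
  | zero => simp [cdPair]
  | succ N ih =>
    obtain ⟨h1, h2⟩ := ih
    have hsum : ∀ p : Polynomial ℂ,
        (∑ k ∈ Finset.range (N + 1),
          Polynomial.C (starRingEnd ℂ (p.coeff k)) * Polynomial.X ^ (N + 1 - k)).natDegree
          ≤ N + 1 := by
      intro p
      refine natDegree_sum_le_of_forall_le _ _ fun k _ => ?_
      refine (natDegree_C_mul_le _ _).trans ?_
      simp [Nat.sub_le]
    constructor
    · refine (natDegree_C_mul_le _ _).trans ((natDegree_sub_le _ _).trans ?_)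
      refine max_le (h1.trans (Nat.le_succ N)) ((natDegree_C_mul_le _ _).trans (hsum _))
    · refine (natDegree_C_mul_le _ _).trans ((natDegree_add_le _ _).trans ?_)
      refine max_le (h2.trans (Nat.le_succ N)) ((natDegree_C_mul_le _ _).trans (hsum _))

lemma key_sum (z : ℂ) (hz : ‖z‖ = 1) (p : Polynomial ℂ) (N : ℕ) (hp : p.natDegree ≤ N) :
    ∑ k ∈ Finset.range (N + 1), (starRingEnd ℂ (p.coeff k)) * z ^ (N + 1 - k)
      = z ^ (N + 1) * starRingEnd ℂ (p.eval z) := by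
  have hz0 : z ≠ 0 := by intro h; simp [h] at hz
  have hconj : starRingEnd ℂ z = z⁻¹ := (Complex.inv_eq_conj hz).symm
  rw [p.eval_eq_sum_range' (lt_of_le_of_lt hp (Nat.lt_succ_self N)), map_sum, Finset.mul_sum]
  refine Finset.sum_congr rfl fun k hk => ?_
  have hk' : k ≤ N + 1 := Nat.le_of_lt_succ (Finset.mem_range.mp hk) |>.trans (Nat.le_succ N)
  rw [map_mul, map_pow, hconj, pow_sub₀ z hz0 hk']
  field_simp
  ring
  rw [inv_pow, mul_assoc, mul_inv_cancel₀ (pow_ne_zero k hz0), mul_one]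

lemma cdPair_prod_eq (ζ : ℕ → ℂ) (N : ℕ) (z : ℂ) (hz : ‖z‖ = 1) :
    ((List.range N).map (fun i => rsFactor ζ (N - i) z)).prod
      = !![starRingEnd ℂ (((cdPair ζ N).2).eval z),
            -(starRingEnd ℂ (((cdPair ζ N).1).eval z));
           ((cdPair ζ N).1).eval z, ((cdPair ζ N).2).eval z] := by
  have hz0 : z ≠ 0 := by intro h; simp [h] at hz
  have hconj : starRingEnd ℂ z = z⁻¹ :=
    (Complex.inv_eq_conj hz).symm
  induction N with
  | zero =>
    simp only [List.range_zero, List.map_nil, List.prod_nil, cdPair, eval_zero, eval_one, map_one,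
      map_zero, neg_zero]
    ext i j
    fin_cases i <;> fin_cases j <;> simp [Matrix.one_apply]
  | succ N ih =>
    have hstep : ((List.range (N+1)).map (fun i => rsFactor ζ (N + 1 - i) z)).prod
        = rsFactor ζ (N+1) z * ((List.range N).map (fun i => rsFactor ζ (N - i) z)).prod := by
      rw [List.range_succ_eq_map, List.map_cons, List.prod_cons, List.map_map]
      congr 1
      simp [Function.comp_def, Nat.succ_sub_succ]
    rw [hstep, ih]
    obtain ⟨hdc, hdd⟩ := cdPair_natDegree ζ N
    set C := ((cdPair ζ N).1).eval z with hC
    set D := ((cdPair ζ N).2).eval z with hD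
    have hSd : ∑ k ∈ Finset.range (N + 1),
        (starRingEnd ℂ ((cdPair ζ N).2.coeff k)) * z ^ (N + 1 - k)
        = z ^ (N + 1) * starRingEnd ℂ D := key_sum z hz _ N hdd
    have hSc : ∑ k ∈ Finset.range (N + 1),
        (starRingEnd ℂ ((cdPair ζ N).1.coeff k)) * z ^ (N + 1 - k)
        = z ^ (N + 1) * starRingEnd ℂ C := key_sum z hz _ N hdc
    have hc1 : ((cdPair ζ (N+1)).1).eval z
        = ((Real.sqrt (1 + ‖ζ (N + 1)‖ ^ 2))⁻¹ : ℝ) *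
          (C - starRingEnd ℂ (ζ (N + 1)) * (z ^ (N + 1) * starRingEnd ℂ D)) := by
      rw [show (cdPair ζ (N+1)).1 = Polynomial.C (((Real.sqrt (1 + ‖ζ (N + 1)‖ ^ 2))⁻¹ : ℝ) : ℂ) *
        ((cdPair ζ N).1 - Polynomial.C (starRingEnd ℂ (ζ (N + 1))) *
        ∑ k ∈ Finset.range (N + 1),
          Polynomial.C (starRingEnd ℂ ((cdPair ζ N).2.coeff k)) * Polynomial.X ^ (N + 1 - k)) from rfl]
      simp only [eval_mul, eval_sub, eval_C, eval_finset_sum, eval_pow, eval_X, ← hC, ← hSd]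
    have hd1 : ((cdPair ζ (N+1)).2).eval z
        = ((Real.sqrt (1 + ‖ζ (N + 1)‖ ^ 2))⁻¹ : ℝ) *
          (D + starRingEnd ℂ (ζ (N + 1)) * (z ^ (N + 1) * starRingEnd ℂ C)) := by
      rw [show (cdPair ζ (N+1)).2 = Polynomial.C (((Real.sqrt (1 + ‖ζ (N + 1)‖ ^ 2))⁻¹ : ℝ) : ℂ) *
        ((cdPair ζ N).2 + Polynomial.C (starRingEnd ℂ (ζ (N + 1))) *
        ∑ k ∈ Finset.range (N + 1),
          Polynomial.C (starRingEnd ℂ ((cdPair ζ N).1.coeff k)) * Polynomial.X ^ (N + 1 - k)) from rfl]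
      simp only [eval_mul, eval_add, eval_C, eval_finset_sum, eval_pow, eval_X, ← hD, ← hSc]
    rw [rsFactor, Matrix.smul_mul, Matrix.mul_fin_two]
    have hzpow : (z : ℂ) ^ (-((N+1 : ℕ) : ℤ)) = (z ^ (N+1))⁻¹ := by
      rw [zpow_neg, zpow_natCast]
    have hzpow' : (z : ℂ) ^ (((N+1 : ℕ)) : ℤ) = z ^ (N+1) := zpow_natCast z (N+1)
    ext i j
    fin_cases i <;> fin_cases j <;>
      simp only [Matrix.smul_apply, Matrix.cons_val', Matrix.cons_val_zero, Matrix.cons_val_one,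
        Matrix.head_cons, Matrix.head_fin_const, Matrix.empty_val', Matrix.cons_val_fin_one,
        Matrix.of_apply, hc1, hd1, hzpow, hzpow', map_mul, map_sub, map_add, map_pow,
        Complex.conj_conj, Complex.conj_ofReal, hconj, smul_eq_mul, Fin.isValue, map_neg,
        map_inv₀, Fin.zero_eta, Fin.mk_one, inv_pow] <;>
      field_simp <;> ring

lemma rsFactor_det (ζ : ℕ → ℂ) (k : ℕ) (z : ℂ) (hz0 : z ≠ 0) : (rsFactor ζ k z).det = 1 := by
  have hpos : (0:ℝ) < 1 + ‖ζ k‖ ^ 2 := by positivity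
  have hz1 : z ^ (-(k:ℤ)) * z ^ (k:ℤ) = 1 := by
    rw [← zpow_add₀ hz0]; simp
  rw [rsFactor, Matrix.det_smul, Matrix.det_fin_two_of]
  have key : (1:ℂ) * 1 - ζ k * z ^ (-(k:ℤ)) * (-(starRingEnd ℂ (ζ k)) * z ^ (k:ℤ))
      = ((1 + ‖ζ k‖ ^ 2 : ℝ) : ℂ) := by
    have h2 := Complex.mul_conj' (ζ k)
    push_cast
    calc (1:ℂ) * 1 - ζ k * z ^ (-(k:ℤ)) * (-(starRingEnd ℂ (ζ k)) * z ^ (k:ℤ))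
        = 1 + ζ k * starRingEnd ℂ (ζ k) * (z ^ (-(k:ℤ)) * z ^ (k:ℤ)) := by ring
      _ = 1 + (‖ζ k‖ : ℂ) ^ 2 := by rw [hz1, h2]; ring
  rw [key]
  have hcard : Fintype.card (Fin 2) = 2 := rfl
  rw [hcard]
  have : ((((Real.sqrt (1 + ‖ζ k‖ ^ 2))⁻¹ : ℝ)) : ℂ) ^ 2 = (((1 + ‖ζ k‖ ^ 2)⁻¹ : ℝ) : ℂ) := by
    rw [← Complex.ofReal_pow]
    congr 1
    rw [inv_pow, Real.sq_sqrt hpos.le]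
  rw [this, ← Complex.ofReal_mul, inv_mul_cancel₀ hpos.ne']
  norm_num

lemma det_list_prod_one (l : List (Matrix (Fin 2) (Fin 2) ℂ)) (h : ∀ A ∈ l, A.det = 1) :
    l.prod.det = 1 := by
  induction l with
  | nil => simp
  | cons A t ih =>
    rw [List.prod_cons, Matrix.det_mul, h A (by simp), one_mul]
    exact ih fun B hB => h B (by simp [hB])

lemma cdPair_eval_zero (ζ : ℕ → ℂ) (N : ℕ) :
    ((cdPair ζ N).1).eval 0 = 0 ∧
    ((cdPair ζ N).2).eval 0 =
      ((∏ k ∈ Finset.range N, (Real.sqrt (1 + ‖ζ (k + 1)‖ ^ 2))⁻¹ : ℝ) : ℂ) := by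
  induction N with
  | zero => simp [cdPair]
  | succ N ih =>
    have hzero : ∀ p : ℂ[X],
        (∑ k ∈ Finset.range (N + 1),
          Polynomial.C (starRingEnd ℂ (p.coeff k)) * X ^ (N + 1 - k)).eval 0 = 0 := by
      intro p
      rw [eval_finset_sum]
      refine Finset.sum_eq_zero fun k hk => ?_
      have hk' : N + 1 - k ≠ 0 := Nat.sub_ne_zero_of_lt (Finset.mem_range.mp hk)
      simp [zero_pow hk']
    constructor
    · rw [show (cdPair ζ (N+1)).1 = Polynomial.C (((Real.sqrt (1 + ‖ζ (N + 1)‖ ^ 2))⁻¹ : ℝ) : ℂ) *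
        ((cdPair ζ N).1 - Polynomial.C (starRingEnd ℂ (ζ (N + 1))) *
        ∑ k ∈ Finset.range (N + 1),
          Polynomial.C (starRingEnd ℂ ((cdPair ζ N).2.coeff k)) * Polynomial.X ^ (N + 1 - k)) from rfl]
      simp [eval_mul, eval_sub, ih.1, hzero]
    · rw [show (cdPair ζ (N+1)).2 = Polynomial.C (((Real.sqrt (1 + ‖ζ (N + 1)‖ ^ 2))⁻¹ : ℝ) : ℂ) *
        ((cdPair ζ N).2 + Polynomial.C (starRingEnd ℂ (ζ (N + 1))) *
        ∑ k ∈ Finset.range (N + 1),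
          Polynomial.C (starRingEnd ℂ ((cdPair ζ N).1.coeff k)) * Polynomial.X ^ (N + 1 - k)) from rfl]
      simp only [eval_mul, eval_add, eval_C, hzero, mul_zero, add_zero, ih.2]
      rw [Finset.prod_range_succ]
      push_cast
      ring

/-- For `|z| = 1`, the partial product `Π_{k=N}^{1}` of the root subgroup factors (with the
`k = N` factor leftmost) equals `[[conj(d_N(z)), −conj(c_N(z))], [c_N(z), d_N(z)]]`;
consequently it lies in `SU(2)`, `|c_N(z)|² + |d_N(z)|² = 1`, `c_N(0) = 0` and
`d_N(0) = Π_{k=1}^{N} (1+|ζ_k|²)^{-1/2} > 0`. -/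
theorem stmt1 (ζ : ℕ → ℂ) (N : ℕ) :
    (∀ z : ℂ, ‖z‖ = 1 →
      (((List.range N).map (fun i => rsFactor ζ (N - i) z)).prod
        = !![starRingEnd ℂ (((cdPair ζ N).2).eval z),
              -(starRingEnd ℂ (((cdPair ζ N).1).eval z));
             ((cdPair ζ N).1).eval z, ((cdPair ζ N).2).eval z]) ∧
      ((List.range N).map (fun i => rsFactor ζ (N - i) z)).prod
          ∈ Matrix.specialUnitaryGroup (Fin 2) ℂ ∧
      ‖((cdPair ζ N).1).eval z‖ ^ 2 + ‖((cdPair ζ N).2).eval z‖ ^ 2 = 1) ∧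
    ((cdPair ζ N).1).eval 0 = 0 ∧
    ((cdPair ζ N).2).eval 0 =
      ((∏ k ∈ Finset.range N, (Real.sqrt (1 + ‖ζ (k + 1)‖ ^ 2))⁻¹ : ℝ) : ℂ) ∧
    0 < ∏ k ∈ Finset.range N, (Real.sqrt (1 + ‖ζ (k + 1)‖ ^ 2))⁻¹ := by
  obtain ⟨hc0, hd0⟩ := cdPair_eval_zero ζ N
  refine ⟨fun z hz => ?_, hc0, hd0, Finset.prod_pos fun i _ => by positivity⟩
  have hz0 : z ≠ 0 := by intro h; simp [h] at hz
  have hprod := cdPair_prod_eq ζ N z hz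
  set C := ((cdPair ζ N).1).eval z with hCdef
  set D := ((cdPair ζ N).2).eval z with hDdef
  have hdet : ((List.range N).map (fun i => rsFactor ζ (N - i) z)).prod.det = 1 := by
    refine det_list_prod_one _ fun A hA => ?_
    obtain ⟨i, _, rfl⟩ := List.mem_map.mp hA
    exact rsFactor_det ζ (N - i) z hz0
  have h1 : starRingEnd ℂ D * D + starRingEnd ℂ C * C = 1 := by
    have h := hdet
    rw [hprod, Matrix.det_fin_two_of] at h
    linear_combination h
  have h2 : ((‖C‖ ^ 2 + ‖D‖ ^ 2 : ℝ) : ℂ) = 1 := by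
    push_cast
    rw [show ((‖C‖ : ℂ)) ^ 2 = C * starRingEnd ℂ C from (Complex.mul_conj' C).symm,
      show ((‖D‖ : ℂ)) ^ 2 = D * starRingEnd ℂ D from (Complex.mul_conj' D).symm]
    linear_combination h1
  refine ⟨hprod, Matrix.mem_specialUnitaryGroup_iff.mpr ⟨?_, hdet⟩, ?_⟩
  · rw [Matrix.mem_unitaryGroup_iff, hprod]
    ext i j
    fin_cases i <;> fin_cases j <;>
      simp [Matrix.mul_apply, Fin.sum_univ_two, Complex.star_def, Matrix.one_apply] <;>
      first
        | linear_combination h1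
        | ring
  · exact_mod_cast h2
end

section
/- Let ζ = (ζ_k)_{k≥1} be a sequence of complex numbers with S := Σ_{k≥1} |ζ_k|² < ∞. Then for every N ≥ 0 and every n ≥ 1, the coefficient of zⁿ in the polynomial d_N satisfies |(d_N)_n| ≤ Σ_{λ ⊢ n} S^{ℓ(λ)}, where the sum is over all partitions λ of n and ℓ(λ) denotes the number of parts of λ. -/
open Polynomial

/-! ### Auxiliary combinatorial quantities -/

/-- `pT ζ d M = ∑_{1 ≤ v, v + d ≤ M} ‖ζ (v+d)‖ ‖ζ v‖`. -/
noncomputable def pT (ζ : ℕ → ℂ) (d M : ℕ) : ℝ :=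
  ∑ v ∈ Finset.Icc 1 (M - d), ‖ζ (v + d)‖ * ‖ζ v‖

/-- Weighted sum over "stacked chains of pairs" with difference multiset `μ`, inside `[1, M]`. -/
noncomputable def Fp (ζ : ℕ → ℂ) : ℕ → Multiset ℕ → ℕ → ℝ
  | 0, _, _ => 1
  | (r + 1), μ, M =>
      (μ.map fun d => ∑ v ∈ Finset.Icc 1 (M - d),
        ‖ζ (v + d)‖ * ‖ζ v‖ * Fp ζ r (μ.erase d) (v - 1)).sum

noncomputable def Db (ζ : ℕ → ℂ) (k M : ℕ) : ℝ :=
  ∑ lam : Nat.Partition k, Fp ζ (Multiset.card lam.parts) lam.parts M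

noncomputable def Cb (ζ : ℕ → ℂ) (N m : ℕ) : ℝ :=
  ∑ j ∈ Finset.Icc 1 N, if m ≤ j then ‖ζ j‖ * Db ζ (j - m) (j - 1) else 0

lemma pT_nonneg (ζ : ℕ → ℂ) (d M : ℕ) : 0 ≤ pT ζ d M :=
  Finset.sum_nonneg fun _ _ => mul_nonneg (norm_nonneg _) (norm_nonneg _)

lemma pT_step (ζ : ℕ → ℂ) (d M : ℕ) :
    pT ζ d (M + 1) = pT ζ d M + (if d ≤ M then ‖ζ (M + 1)‖ * ‖ζ (M + 1 - d)‖ else 0) := by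
  unfold pT
  by_cases h : d ≤ M
  · have h1 : M + 1 - d = (M - d) + 1 := by omega
    rw [h1, Finset.sum_Icc_succ_top (Nat.le_add_left 1 _), if_pos h]
    have h2 : M - d + 1 + d = M + 1 := by omega
    have h4 : M - d + 1 = M + 1 - d := by omega
    rw [h2, h4]
  · have h1 : M + 1 - d = 0 := by omega
    have h2 : M - d = 0 := by omega
    rw [if_neg h, h1, h2, add_zero]

lemma pT_mono (ζ : ℕ → ℂ) (d : ℕ) {M M' : ℕ} (h : M ≤ M') : pT ζ d M ≤ pT ζ d M' := by
  apply Finset.sum_le_sum_of_subset_of_nonneg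
  · exact Finset.Icc_subset_Icc_right (Nat.sub_le_sub_right h d)
  · intro i _ _; exact mul_nonneg (norm_nonneg _) (norm_nonneg _)

lemma Fp_nonneg (ζ : ℕ → ℂ) : ∀ (r : ℕ) (μ : Multiset ℕ) (M : ℕ), 0 ≤ Fp ζ r μ M := by
  intro r
  induction r with
  | zero => intro μ M; simp [Fp]
  | succ r ih =>
    intro μ M
    simp only [Fp]
    apply Multiset.sum_nonneg
    intro x hx
    obtain ⟨d, _, rfl⟩ := Multiset.mem_map.mp hx
    apply Finset.sum_nonneg
    intro v _
    exact mul_nonneg (mul_nonneg (norm_nonneg _) (norm_nonneg _)) (ih _ _)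

lemma Fp_mono (ζ : ℕ → ℂ) : ∀ (r : ℕ) (μ : Multiset ℕ) {M M' : ℕ}, M ≤ M' →
    Fp ζ r μ M ≤ Fp ζ r μ M' := by
  intro r
  induction r with
  | zero => intro μ M M' _; simp [Fp]
  | succ r ih =>
    intro μ M M' h
    simp only [Fp]
    apply Multiset.sum_map_le_sum_map
    intro d _
    apply Finset.sum_le_sum_of_subset_of_nonneg
    · exact Finset.Icc_subset_Icc_right (Nat.sub_le_sub_right h d)
    · intro v _ _
      exact mul_nonneg (mul_nonneg (norm_nonneg _) (norm_nonneg _)) (Fp_nonneg ζ _ _ _)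

lemma Fp_step (ζ : ℕ → ℂ) (r : ℕ) (μ : Multiset ℕ) (M : ℕ) :
    Fp ζ (r + 1) μ (M + 1) = Fp ζ (r + 1) μ M +
      (μ.map fun d => if d ≤ M then
        ‖ζ (M + 1)‖ * ‖ζ (M + 1 - d)‖ * Fp ζ r (μ.erase d) (M - d) else 0).sum := by
  simp only [Fp]
  rw [← Multiset.sum_map_add]
  congr 1
  apply Multiset.map_congr rfl
  intro d _
  by_cases h : d ≤ M
  · have h1 : M + 1 - d = (M - d) + 1 := by omega
    rw [h1, Finset.sum_Icc_succ_top (Nat.le_add_left 1 _), if_pos h]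
    have h3 : M - d + 1 - 1 = M - d := by omega
    have h2 : M - d + 1 + d = M + 1 := by omega
    have h4 : M - d + 1 = M + 1 - d := by omega
    rw [h3, h2, h4]
  · have h1 : M + 1 - d = 0 := by omega
    have h2 : M - d = 0 := by omega
    rw [if_neg h, h1, h2, add_zero]

lemma prod_map_nonneg {μ : Multiset ℕ} {f : ℕ → ℝ} (hf : ∀ d, 0 ≤ f d) :
    0 ≤ (μ.map f).prod := by
  apply Multiset.prod_nonneg
  intro x hx
  obtain ⟨d, _, rfl⟩ := Multiset.mem_map.mp hx
  exact hf d

lemma prod_map_mono {μ : Multiset ℕ} {f g : ℕ → ℝ} (hf : ∀ d, 0 ≤ f d)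
    (hfg : ∀ d, f d ≤ g d) : (μ.map f).prod ≤ (μ.map g).prod := by
  induction μ using Multiset.induction with
  | empty => simp
  | cons c ρ ih =>
    simp only [Multiset.map_cons, Multiset.prod_cons]
    exact mul_le_mul (hfg c) ih (prod_map_nonneg hf) (le_trans (hf c) (hfg c))

lemma superadd (a b : ℕ → ℝ) (ha : ∀ d, 0 ≤ a d) (hab : ∀ d, a d ≤ b d)
    (μ : Multiset ℕ) :
    (μ.map a).prod + (μ.map fun d => (b d - a d) * ((μ.erase d).map a).prod).sum
      ≤ (μ.map b).prod := by
  classical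
  induction μ using Multiset.induction with
  | empty => simp
  | cons c ρ ih =>
    have hprodA : 0 ≤ (ρ.map a).prod := prod_map_nonneg ha
    have hprodAB : (ρ.map a).prod ≤ (ρ.map b).prod := prod_map_mono ha hab
    have hsum_nonneg :
        0 ≤ (ρ.map fun d => (b d - a d) * ((ρ.erase d).map a).prod).sum := by
      apply Multiset.sum_nonneg
      intro x hx
      obtain ⟨d, _, rfl⟩ := Multiset.mem_map.mp hx
      exact mul_nonneg (by linarith [hab d]) (prod_map_nonneg ha)
    simp only [Multiset.map_cons, Multiset.prod_cons, Multiset.sum_cons,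
      Multiset.erase_cons_head]
    have hrw : (ρ.map fun d => (b d - a d) * (((c ::ₘ ρ).erase d).map a).prod).sum
        = (ρ.map fun d => a c * ((b d - a d) * ((ρ.erase d).map a).prod)).sum := by
      apply congrArg Multiset.sum
      apply Multiset.map_congr rfl
      intro d hd
      by_cases hdc : d = c
      · subst hdc
        rw [Multiset.erase_cons_head, ← Multiset.prod_map_erase (f := a) hd]
        ring
      · rw [Multiset.erase_cons_tail _ (fun h => hdc h.symm), Multiset.map_cons,
          Multiset.prod_cons]
        ring
    rw [hrw, Multiset.sum_map_mul_left]
    have h1 := mul_le_mul_of_nonneg_left ih (ha c)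
    have h2 := mul_le_mul_of_nonneg_left hprodAB (sub_nonneg.mpr (hab c))
    nlinarith [h1, h2]

lemma Fp_le_prod (ζ : ℕ → ℂ) :
    ∀ (M r : ℕ) (μ : Multiset ℕ), Multiset.card μ = r →
      Fp ζ r μ M ≤ (μ.map fun d => pT ζ d M).prod := by
  intro M
  induction M with
  | zero =>
    intro r μ hcard
    cases r with
    | zero =>
      have h0 : μ = 0 := Multiset.card_eq_zero.mp hcard
      subst h0; simp [Fp]
    | succ r =>
      have h0 : Fp ζ (r + 1) μ 0 = 0 := by
        simp only [Fp]
        apply Multiset.sum_eq_zero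
        intro x hx
        obtain ⟨d, _, rfl⟩ := Multiset.mem_map.mp hx
        have h1 : (0 : ℕ) - d = 0 := by omega
        rw [h1]
        simp
      rw [h0]
      exact prod_map_nonneg (fun d => pT_nonneg ζ d 0)
  | succ M ihM =>
    intro r μ hcard
    cases r with
    | zero =>
      have h0 : μ = 0 := Multiset.card_eq_zero.mp hcard
      subst h0; simp [Fp]
    | succ r =>
      rw [Fp_step]
      have h1 := ihM (r + 1) μ hcard
      have h2 : (μ.map fun d => if d ≤ M then
            ‖ζ (M + 1)‖ * ‖ζ (M + 1 - d)‖ * Fp ζ r (μ.erase d) (M - d) else 0).sum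
          ≤ (μ.map fun d => (pT ζ d (M + 1) - pT ζ d M) *
              ((μ.erase d).map fun e => pT ζ e M).prod).sum := by
        apply Multiset.sum_map_le_sum_map
        intro d hd
        by_cases h : d ≤ M
        · rw [if_pos h]
          have hdiff : pT ζ d (M + 1) - pT ζ d M = ‖ζ (M + 1)‖ * ‖ζ (M + 1 - d)‖ := by
            rw [pT_step, if_pos h]; ring
          rw [hdiff]
          apply mul_le_mul_of_nonneg_left _ (mul_nonneg (norm_nonneg _) (norm_nonneg _))
          calc Fp ζ r (μ.erase d) (M - d) ≤ Fp ζ r (μ.erase d) M :=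
                Fp_mono ζ r _ (by omega)
            _ ≤ ((μ.erase d).map fun e => pT ζ e M).prod := by
                apply ihM r
                rw [Multiset.card_erase_of_mem hd, hcard]
                rfl
        · rw [if_neg h]
          have hdiff : pT ζ d (M + 1) - pT ζ d M = 0 := by
            rw [pT_step, if_neg h]; ring
          rw [hdiff, zero_mul]
      calc Fp ζ (r + 1) μ M + (μ.map fun d => if d ≤ M then
              ‖ζ (M + 1)‖ * ‖ζ (M + 1 - d)‖ * Fp ζ r (μ.erase d) (M - d) else 0).sum
          ≤ (μ.map fun d => pT ζ d M).prod +
            (μ.map fun d => (pT ζ d (M + 1) - pT ζ d M) *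
              ((μ.erase d).map fun e => pT ζ e M).prod).sum := add_le_add h1 h2
        _ ≤ (μ.map fun d => pT ζ d (M + 1)).prod :=
            superadd _ _ (fun d => pT_nonneg ζ d M)
              (fun d => pT_mono ζ d (Nat.le_succ M)) μ

lemma pT_le_S (ζ : ℕ → ℂ) (hζ : Summable fun k : ℕ => ‖ζ (k + 1)‖ ^ 2) (d M : ℕ) :
    pT ζ d M ≤ ∑' k : ℕ, ‖ζ (k + 1)‖ ^ 2 := by
  have hhalf : ∀ (c K : ℕ), ∑ v ∈ Finset.Icc 1 K, ‖ζ (v + c)‖ ^ 2 ≤ ∑' k : ℕ, ‖ζ (k + 1)‖ ^ 2 := by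
    intro c K
    have hrw : ∑ v ∈ Finset.Icc 1 K, ‖ζ (v + c)‖ ^ 2
        = ∑ k ∈ (Finset.Icc 1 K).image (fun v => v + c - 1), ‖ζ (k + 1)‖ ^ 2 := by
      have hinj : ∀ x ∈ Finset.Icc 1 K, ∀ y ∈ Finset.Icc 1 K,
          x + c - 1 = y + c - 1 → x = y := by
        intro x hx y hy hxy
        simp only [Finset.mem_Icc] at hx hy
        omega
      rw [Finset.sum_image hinj]
      apply Finset.sum_congr rfl
      intro v hv
      have hv1 : 1 ≤ v := (Finset.mem_Icc.mp hv).1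
      have he : v + c - 1 + 1 = v + c := by omega
      rw [he]
    rw [hrw]
    exact Summable.sum_le_tsum _ (fun i _ => by positivity) hζ
  have hsplit : pT ζ d M ≤ (∑ v ∈ Finset.Icc 1 (M - d), ‖ζ (v + d)‖ ^ 2 +
      ∑ v ∈ Finset.Icc 1 (M - d), ‖ζ v‖ ^ 2) / 2 := by
    rw [← Finset.sum_add_distrib, Finset.sum_div]
    apply Finset.sum_le_sum
    intro v _
    nlinarith [sq_nonneg (‖ζ (v + d)‖ - ‖ζ v‖)]
  have hz : ∑ v ∈ Finset.Icc 1 (M - d), ‖ζ v‖ ^ 2 ≤ ∑' k : ℕ, ‖ζ (k + 1)‖ ^ 2 := by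
    have := hhalf 0 (M - d)
    simpa using this
  have := hhalf d (M - d)
  linarith [hsplit, this, hz]

lemma Db_nonneg (ζ : ℕ → ℂ) (k M : ℕ) : 0 ≤ Db ζ k M :=
  Finset.sum_nonneg fun _ _ => Fp_nonneg ζ _ _ _

lemma Db_mono (ζ : ℕ → ℂ) (k : ℕ) {M M' : ℕ} (h : M ≤ M') : Db ζ k M ≤ Db ζ k M' :=
  Finset.sum_le_sum fun lam _ => Fp_mono ζ _ _ h

lemma Cb_nonneg (ζ : ℕ → ℂ) (N m : ℕ) : 0 ≤ Cb ζ N m := by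
  apply Finset.sum_nonneg
  intro j _
  by_cases h : m ≤ j
  · rw [if_pos h]; exact mul_nonneg (norm_nonneg _) (Db_nonneg ζ _ _)
  · rw [if_neg h]

lemma Db_zero_eq_one (ζ : ℕ → ℂ) (M : ℕ) : Db ζ 0 M = 1 := by
  have huniq : ∀ lam : Nat.Partition 0, lam.parts = 0 := by
    intro lam
    apply Multiset.eq_zero_of_forall_notMem
    intro x hx
    have h1 := lam.parts_pos hx
    have h2 := lam.parts_sum
    have h3 : x = 0 := by
      have := Multiset.sum_eq_zero_iff.mp h2 x hx
      exact this
    omega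
  rw [Db]
  have : ∀ lam : Nat.Partition 0,
      Fp ζ (Multiset.card lam.parts) lam.parts M = 1 := by
    intro lam
    rw [huniq lam]
    simp [Fp]
  rw [Finset.sum_congr rfl (fun lam _ => this lam), Finset.sum_const]
  simp [Finset.card_univ]

lemma Cb_succ (ζ : ℕ → ℂ) (N m : ℕ) :
    Cb ζ (N + 1) m = Cb ζ N m +
      (if m ≤ N + 1 then ‖ζ (N + 1)‖ * Db ζ (N + 1 - m) N else 0) := by
  unfold Cb
  rw [Finset.sum_Icc_succ_top (by omega)]
  norm_num

/-! ### The key combinatorial inequality -/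

noncomputable def junkP (n : ℕ) : Nat.Partition n :=
  ⟨Multiset.replicate n 1,
   fun {i} hi => by rw [Multiset.eq_of_mem_replicate hi]; norm_num,
   by simp⟩

noncomputable def hterm (ζ : ℕ → ℂ) (n N : ℕ) (lam : Nat.Partition n) (d : ℕ) : ℝ :=
  if d ≤ N then ‖ζ (N + 1)‖ * ‖ζ (N + 1 - d)‖ *
    Fp ζ (Multiset.card lam.parts - 1) (lam.parts.erase d) (N - d) else 0

noncomputable def phi (n N : ℕ) :
    ((j : ℕ) × Nat.Partition (j - (N + 1 - n))) → ((lam : Nat.Partition n) × ℕ) := fun x =>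
  if h : 1 ≤ x.1 ∧ x.1 ≤ N ∧ N + 1 - n ≤ x.1 ∧ 1 ≤ n ∧ n ≤ N + 1 then
    ⟨⟨(N + 1 - x.1) ::ₘ x.2.parts,
      fun {i} hi => by
        rcases Multiset.mem_cons.mp hi with rfl | h2
        · omega
        · exact x.2.parts_pos h2,
      by rw [Multiset.sum_cons, x.2.parts_sum]; omega⟩,
     N + 1 - x.1⟩
  else ⟨junkP n, 0⟩

lemma hterm_nonneg (ζ : ℕ → ℂ) (n N : ℕ) (lam : Nat.Partition n) (d : ℕ) :
    0 ≤ hterm ζ n N lam d := by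
  unfold hterm
  by_cases h : d ≤ N
  · rw [if_pos h]
    exact mul_nonneg (mul_nonneg (norm_nonneg _) (norm_nonneg _)) (Fp_nonneg ζ _ _ _)
  · rw [if_neg h]

set_option maxHeartbeats 1000000 in
lemma key (ζ : ℕ → ℂ) (N n : ℕ) (hn1 : 1 ≤ n) (hn2 : n ≤ N + 1) :
    Db ζ n N + ‖ζ (N + 1)‖ * Cb ζ N (N + 1 - n) ≤ Db ζ n (N + 1) := by
  classical
  have expand : Db ζ n (N + 1) = Db ζ n N +
      ∑ lam : Nat.Partition n, (lam.parts.map (hterm ζ n N lam)).sum := by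
    rw [Db, Db, ← Finset.sum_add_distrib]
    apply Finset.sum_congr rfl
    intro lam _
    obtain ⟨r, hr⟩ : ∃ r, Multiset.card lam.parts = r + 1 := by
      have h0 : lam.parts ≠ 0 := by
        intro h
        have hs := lam.parts_sum
        rw [h] at hs
        simp at hs
        omega
      have hpos : 0 < Multiset.card lam.parts := Multiset.card_pos.mpr h0
      exact ⟨Multiset.card lam.parts - 1, by omega⟩
    unfold hterm
    rw [hr]
    simp only [Nat.add_sub_cancel]
    exact Fp_step ζ r lam.parts N
  rw [expand]
  refine add_le_add le_rfl ?_
  have step1 : ∑ lam : Nat.Partition n, ∑ d ∈ lam.parts.toFinset, hterm ζ n N lam d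
      ≤ ∑ lam : Nat.Partition n, (lam.parts.map (hterm ζ n N lam)).sum := by
    apply Finset.sum_le_sum
    intro lam _
    rw [Finset.sum_multiset_map_count]
    apply Finset.sum_le_sum
    intro d hd
    have hc : 1 ≤ Multiset.count d lam.parts :=
      Multiset.one_le_count_iff_mem.mpr (Multiset.mem_toFinset.mp hd)
    rw [nsmul_eq_mul]
    nth_rewrite 1 [← one_mul (hterm ζ n N lam d)]
    apply mul_le_mul_of_nonneg_right _ (hterm_nonneg ζ n N lam d)
    exact_mod_cast hc
  refine le_trans ?_ step1
  rw [Cb, Finset.mul_sum]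
  set m := N + 1 - n with hm
  have lhs_eq : ∑ j ∈ Finset.Icc 1 N,
        ‖ζ (N + 1)‖ * (if m ≤ j then ‖ζ j‖ * Db ζ (j - m) (j - 1) else 0)
      = ∑ x ∈ ((Finset.Icc 1 N).filter (fun j => m ≤ j)).sigma
            (fun j => (Finset.univ : Finset (Nat.Partition (j - m)))),
          ‖ζ (N + 1)‖ * ‖ζ x.1‖ * Fp ζ (Multiset.card x.2.parts) x.2.parts (x.1 - 1) := by
    rw [Finset.sum_sigma, Finset.sum_filter]
    apply Finset.sum_congr rfl
    intro j _
    by_cases h : m ≤ j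
    · rw [if_pos h, if_pos h, Db, Finset.mul_sum, Finset.mul_sum]
      apply Finset.sum_congr rfl
      intro μ _
      ring
    · rw [if_neg h, if_neg h, mul_zero]
  rw [lhs_eq]
  set S1 := ((Finset.Icc 1 N).filter (fun j => m ≤ j)).sigma
      (fun j => (Finset.univ : Finset (Nat.Partition (j - m)))) with hS1
  have memS1 : ∀ x ∈ S1, 1 ≤ x.1 ∧ x.1 ≤ N ∧ N + 1 - n ≤ x.1 ∧ 1 ≤ n ∧ n ≤ N + 1 := by
    intro x hx
    rw [hS1, Finset.mem_sigma] at hx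
    have h1 := hx.1
    rw [Finset.mem_filter, Finset.mem_Icc] at h1
    exact ⟨h1.1.1, h1.1.2, h1.2, hn1, hn2⟩
  have hagree : ∀ x ∈ S1,
      ‖ζ (N + 1)‖ * ‖ζ x.1‖ * Fp ζ (Multiset.card x.2.parts) x.2.parts (x.1 - 1)
        = hterm ζ n N (phi n N x).1 (phi n N x).2 := by
    intro x hx
    have hc := memS1 x hx
    simp only [phi, dif_pos hc]
    unfold hterm
    rw [if_pos (by omega : N + 1 - x.1 ≤ N)]
    simp only [Multiset.card_cons, Nat.add_sub_cancel, Multiset.erase_cons_head]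
    have e1 : N + 1 - (N + 1 - x.1) = x.1 := by omega
    have e2 : N - (N + 1 - x.1) = x.1 - 1 := by omega
    rw [e1, e2]
  have hinj : ∀ x ∈ S1, ∀ y ∈ S1, phi n N x = phi n N y → x = y := by
    intro x hx y hy hxy
    have hcx := memS1 x hx
    have hcy := memS1 y hy
    simp only [phi, dif_pos hcx, dif_pos hcy] at hxy
    have h2 : N + 1 - x.1 = N + 1 - y.1 := congrArg (fun z => z.2) hxy
    have hj : x.1 = y.1 := by omega
    obtain ⟨j, μ⟩ := x
    obtain ⟨j', μ'⟩ := y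
    simp only at hj
    subst hj
    have h1 : ((N + 1 - j) ::ₘ μ.parts : Multiset ℕ) = (N + 1 - j) ::ₘ μ'.parts := by
      have := congrArg (fun z => z.1.parts) hxy
      simpa using this
    have hparts : μ.parts = μ'.parts := by
      rwa [Multiset.cons_inj_right] at h1
    have : μ = μ' := Nat.Partition.ext hparts
    rw [this]
  calc ∑ x ∈ S1, ‖ζ (N + 1)‖ * ‖ζ x.1‖ * Fp ζ (Multiset.card x.2.parts) x.2.parts (x.1 - 1)
      = ∑ x ∈ S1, hterm ζ n N (phi n N x).1 (phi n N x).2 :=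
        Finset.sum_congr rfl hagree
    _ = ∑ z ∈ S1.image (phi n N), hterm ζ n N z.1 z.2 :=
        (Finset.sum_image (f := fun z => hterm ζ n N z.1 z.2) hinj).symm
    _ ≤ ∑ z ∈ (Finset.univ : Finset (Nat.Partition n)).sigma
          (fun lam => lam.parts.toFinset), hterm ζ n N z.1 z.2 := by
        apply Finset.sum_le_sum_of_subset_of_nonneg
        · intro z hz
          rw [Finset.mem_image] at hz
          obtain ⟨x, hx, rfl⟩ := hz
          have hc := memS1 x hx
          simp only [phi, dif_pos hc]
          rw [Finset.mem_sigma]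
          refine ⟨Finset.mem_univ _, ?_⟩
          rw [Multiset.mem_toFinset]
          exact Multiset.mem_cons_self _ _
        · intro z _ _
          exact hterm_nonneg ζ n N z.1 z.2
    _ = ∑ lam : Nat.Partition n, ∑ d ∈ lam.parts.toFinset, hterm ζ n N lam d :=
        Finset.sum_sigma _ _ _

/-! ### Coefficient bounds -/

lemma cdPair_succ_fst (ζ : ℕ → ℂ) (N : ℕ) :
    (cdPair ζ (N + 1)).1 = Polynomial.C (((Real.sqrt (1 + ‖ζ (N + 1)‖ ^ 2))⁻¹ : ℝ) : ℂ) *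
      ((cdPair ζ N).1 - Polynomial.C (starRingEnd ℂ (ζ (N + 1))) *
        ∑ k ∈ Finset.range (N + 1),
          Polynomial.C (starRingEnd ℂ ((cdPair ζ N).2.coeff k)) * Polynomial.X ^ (N + 1 - k)) := by
  rw [cdPair]

lemma cdPair_succ_snd (ζ : ℕ → ℂ) (N : ℕ) :
    (cdPair ζ (N + 1)).2 = Polynomial.C (((Real.sqrt (1 + ‖ζ (N + 1)‖ ^ 2))⁻¹ : ℝ) : ℂ) *
      ((cdPair ζ N).2 + Polynomial.C (starRingEnd ℂ (ζ (N + 1))) *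
        ∑ k ∈ Finset.range (N + 1),
          Polynomial.C (starRingEnd ℂ ((cdPair ζ N).1.coeff k)) * Polynomial.X ^ (N + 1 - k)) := by
  rw [cdPair]

lemma coeff_convSum (p : Polynomial ℂ) (N n : ℕ) :
    (∑ k ∈ Finset.range (N + 1),
        Polynomial.C (starRingEnd ℂ (p.coeff k)) * Polynomial.X ^ (N + 1 - k)).coeff n
      = if 1 ≤ n ∧ n ≤ N + 1 then starRingEnd ℂ (p.coeff (N + 1 - n)) else 0 := by
  rw [Polynomial.finset_sum_coeff]
  simp only [Polynomial.coeff_C_mul, Polynomial.coeff_X_pow, mul_ite, mul_one, mul_zero]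
  by_cases h : 1 ≤ n ∧ n ≤ N + 1
  · rw [if_pos h, Finset.sum_eq_single (N + 1 - n)]
    · rw [if_pos (by omega)]
    · intro k hk hne
      rw [Finset.mem_range] at hk
      rw [if_neg]
      intro heq
      exact hne (by omega)
    · intro habs
      exact absurd (Finset.mem_range.2 (by omega)) habs
  · rw [if_neg h]
    apply Finset.sum_eq_zero
    intro k hk
    rw [Finset.mem_range] at hk
    rw [if_neg]
    intro heq
    exact h (by omega)

lemma coefBound (ζ : ℕ → ℂ) (N : ℕ) :
    (∀ m, ‖((cdPair ζ N).1).coeff m‖ ≤ Cb ζ N m) ∧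
    (∀ n, ‖((cdPair ζ N).2).coeff n‖ ≤ Db ζ n N) := by
  induction N with
  | zero =>
    constructor
    · intro m
      have h1 : (cdPair ζ 0).1 = 0 := rfl
      have h2 : Cb ζ 0 m = 0 := by
        unfold Cb
        rw [show Finset.Icc 1 0 = ∅ from Finset.Icc_eq_empty (by omega)]
        simp
      rw [h1, h2]
      simp
    · intro n
      have h1 : (cdPair ζ 0).2 = 1 := rfl
      rw [h1]
      cases n with
      | zero =>
        rw [Db_zero_eq_one]
        simp
      | succ n =>
        have : ((1 : Polynomial ℂ)).coeff (n + 1) = 0 := by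
          rw [Polynomial.coeff_one]
          simp
        rw [this]
        simpa using Db_nonneg ζ (n + 1) 0
  | succ N ih =>
    obtain ⟨ihc, ihd⟩ := ih
    have ha : ‖(((Real.sqrt (1 + ‖ζ (N + 1)‖ ^ 2))⁻¹ : ℝ) : ℂ)‖ ≤ 1 := by
      rw [Complex.norm_real, Real.norm_eq_abs, abs_of_nonneg (by positivity)]
      apply inv_le_one_of_one_le₀
      rw [Real.one_le_sqrt]
      nlinarith [sq_nonneg ‖ζ (N + 1)‖]
    constructor
    · intro m
      rw [cdPair_succ_fst, Polynomial.coeff_C_mul, Polynomial.coeff_sub,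
        Polynomial.coeff_C_mul, coeff_convSum, norm_mul]
      have triangle : ‖((cdPair ζ N).1).coeff m - starRingEnd ℂ (ζ (N + 1)) *
            (if 1 ≤ m ∧ m ≤ N + 1 then starRingEnd ℂ (((cdPair ζ N).2).coeff (N + 1 - m)) else 0)‖
          ≤ ‖((cdPair ζ N).1).coeff m‖ + ‖ζ (N + 1)‖ *
            ‖(if 1 ≤ m ∧ m ≤ N + 1 then starRingEnd ℂ (((cdPair ζ N).2).coeff (N + 1 - m)) else 0)‖ := by
        calc _ ≤ ‖((cdPair ζ N).1).coeff m‖ + ‖starRingEnd ℂ (ζ (N + 1)) *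
              (if 1 ≤ m ∧ m ≤ N + 1 then starRingEnd ℂ (((cdPair ζ N).2).coeff (N + 1 - m)) else 0)‖ :=
            norm_sub_le _ _
          _ = _ := by rw [norm_mul, RCLike.norm_conj]
      have hb : ‖(((Real.sqrt (1 + ‖ζ (N + 1)‖ ^ 2))⁻¹ : ℝ) : ℂ)‖ *
            ‖((cdPair ζ N).1).coeff m - starRingEnd ℂ (ζ (N + 1)) *
              (if 1 ≤ m ∧ m ≤ N + 1 then starRingEnd ℂ (((cdPair ζ N).2).coeff (N + 1 - m)) else 0)‖
          ≤ ‖((cdPair ζ N).1).coeff m‖ + ‖ζ (N + 1)‖ *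
            ‖(if 1 ≤ m ∧ m ≤ N + 1 then starRingEnd ℂ (((cdPair ζ N).2).coeff (N + 1 - m)) else 0)‖ := by
        calc _ ≤ 1 * (‖((cdPair ζ N).1).coeff m‖ + ‖ζ (N + 1)‖ *
              ‖(if 1 ≤ m ∧ m ≤ N + 1 then starRingEnd ℂ (((cdPair ζ N).2).coeff (N + 1 - m)) else 0)‖) :=
            mul_le_mul ha triangle (norm_nonneg _)
              zero_le_one
          _ = _ := one_mul _
      refine le_trans hb ?_
      rw [Cb_succ]
      by_cases hm : 1 ≤ m ∧ m ≤ N + 1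
      · rw [if_pos hm, if_pos hm.2, RCLike.norm_conj]
        exact add_le_add (ihc m)
          (mul_le_mul_of_nonneg_left (ihd (N + 1 - m)) (norm_nonneg _))
      · rw [if_neg hm]
        simp only [norm_zero, mul_zero, add_zero]
        refine le_trans (ihc m) (le_add_of_nonneg_right ?_)
        by_cases h : m ≤ N + 1
        · rw [if_pos h]
          exact mul_nonneg (norm_nonneg _) (Db_nonneg ζ _ _)
        · rw [if_neg h]
    · intro n
      rw [cdPair_succ_snd, Polynomial.coeff_C_mul, Polynomial.coeff_add,
        Polynomial.coeff_C_mul, coeff_convSum, norm_mul]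
      have triangle : ‖((cdPair ζ N).2).coeff n + starRingEnd ℂ (ζ (N + 1)) *
            (if 1 ≤ n ∧ n ≤ N + 1 then starRingEnd ℂ (((cdPair ζ N).1).coeff (N + 1 - n)) else 0)‖
          ≤ ‖((cdPair ζ N).2).coeff n‖ + ‖ζ (N + 1)‖ *
            ‖(if 1 ≤ n ∧ n ≤ N + 1 then starRingEnd ℂ (((cdPair ζ N).1).coeff (N + 1 - n)) else 0)‖ := by
        calc _ ≤ ‖((cdPair ζ N).2).coeff n‖ + ‖starRingEnd ℂ (ζ (N + 1)) *
              (if 1 ≤ n ∧ n ≤ N + 1 then starRingEnd ℂ (((cdPair ζ N).1).coeff (N + 1 - n)) else 0)‖ :=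
            norm_add_le _ _
          _ = _ := by rw [norm_mul, RCLike.norm_conj]
      have hb : ‖(((Real.sqrt (1 + ‖ζ (N + 1)‖ ^ 2))⁻¹ : ℝ) : ℂ)‖ *
            ‖((cdPair ζ N).2).coeff n + starRingEnd ℂ (ζ (N + 1)) *
              (if 1 ≤ n ∧ n ≤ N + 1 then starRingEnd ℂ (((cdPair ζ N).1).coeff (N + 1 - n)) else 0)‖
          ≤ ‖((cdPair ζ N).2).coeff n‖ + ‖ζ (N + 1)‖ *
            ‖(if 1 ≤ n ∧ n ≤ N + 1 then starRingEnd ℂ (((cdPair ζ N).1).coeff (N + 1 - n)) else 0)‖ := by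
        calc _ ≤ 1 * (‖((cdPair ζ N).2).coeff n‖ + ‖ζ (N + 1)‖ *
              ‖(if 1 ≤ n ∧ n ≤ N + 1 then starRingEnd ℂ (((cdPair ζ N).1).coeff (N + 1 - n)) else 0)‖) :=
            mul_le_mul ha triangle (norm_nonneg _) zero_le_one
          _ = _ := one_mul _
      refine le_trans hb ?_
      by_cases hn : 1 ≤ n ∧ n ≤ N + 1
      · rw [if_pos hn, RCLike.norm_conj]
        refine le_trans (add_le_add (ihd n)
          (mul_le_mul_of_nonneg_left (ihc (N + 1 - n)) (norm_nonneg _))) ?_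
        exact key ζ N n hn.1 hn.2
      · rw [if_neg hn]
        simp only [norm_zero, mul_zero, add_zero]
        exact le_trans (ihd n) (Db_mono ζ n (Nat.le_succ N))

/-- If `S = Σ_{k≥1} |ζ_k|² < ∞`, then for every `N ≥ 0` and every `n ≥ 1`, the `n`-th
coefficient of `d_N` satisfies `|(d_N)_n| ≤ Σ_{λ ⊢ n} S^{ℓ(λ)}`, the sum being over all
partitions `λ` of `n`, with `ℓ(λ)` the number of parts. -/
theorem stmt2 (ζ : ℕ → ℂ) (hζ : Summable fun k : ℕ => ‖ζ (k + 1)‖ ^ 2)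
    (N n : ℕ) (hn : 1 ≤ n) :
    ‖((cdPair ζ N).2).coeff n‖ ≤
      ∑ lam : Nat.Partition n,
        (∑' k : ℕ, ‖ζ (k + 1)‖ ^ 2) ^ (Multiset.card lam.parts) := by
  refine le_trans ((coefBound ζ N).2 n) ?_
  rw [Db]
  apply Finset.sum_le_sum
  intro lam _
  calc Fp ζ (Multiset.card lam.parts) lam.parts N
      ≤ (lam.parts.map fun d => pT ζ d N).prod := Fp_le_prod ζ N _ _ rfl
    _ ≤ (lam.parts.map fun _ => ∑' k : ℕ, ‖ζ (k + 1)‖ ^ 2).prod :=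
        prod_map_mono (fun d => pT_nonneg ζ d N) (fun d => pT_le_S ζ hζ d N)
    _ = (∑' k : ℕ, ‖ζ (k + 1)‖ ^ 2) ^ (Multiset.card lam.parts) := by
        rw [Multiset.map_const', Multiset.prod_replicate]
end

section
/- Let x : ℕ → ℂ satisfy x₀ = 0 and Σ_{n≥1} n·|x_n|² < ∞. For i, j ∈ ℕ set K_{ij} := Σ_{n≥0} x_{i+n}·conj(x_{j+n}) (an absolutely convergent sum) and K'_{ij} := K_{i+1, j+1}. Then the matrices (K_{ij}) and (K'_{ij}) define bounded positive operators T and T' on ℓ²(ℕ), the operators 1 + T and 1 + T' are invertible, and, with v ∈ ℓ²(ℕ) denoting the vector v_i = x_i and e₀ the first standard basis vector, one has ⟨e₀, (1+T)^{-1} e₀⟩ · (1 + ⟨v, (1+T')^{-1} v⟩) = 1. -/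
open scoped ComplexOrder

noncomputable section

/-- `ℓ²(ℕ)`, the Hilbert space of square-summable complex sequences. -/
abbrev ellTwo : Type := lp (fun _ : ℕ => ℂ) 2

namespace Stmt9

open ContinuousLinearMap
open scoped ComplexConjugate ENNReal NNReal

abbrev e (i : ℕ) : ellTwo := lp.single 2 i 1

lemma inner_e (i : ℕ) (f : ellTwo) : (inner ℂ (e i) f : ℂ) = f i := by
  simp [e, lp.inner_single_left, RCLike.inner_apply]

lemma ellTwo_ext {f g : ellTwo} (h : ∀ i, (f : ∀ _ : ℕ, ℂ) i = g i) : f = g :=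
  lp.ext (funext h)

lemma clm_ext_entries {M M' : ellTwo →L[ℂ] ellTwo}
    (h : ∀ i j, (inner ℂ (e i) (M (e j)) : ℂ) = inner ℂ (e i) (M' (e j))) : M = M' := by
  have hsingle : ∀ j, M (e j) = M' (e j) := by
    intro j
    refine ellTwo_ext fun i => ?_
    rw [← inner_e, ← inner_e, h]
  refine ContinuousLinearMap.ext fun u => ?_
  have hu : HasSum (fun i : ℕ => lp.single 2 i (u i)) u :=
    lp.hasSum_single ENNReal.ofNat_ne_top u
  have h1 : HasSum (fun i : ℕ => M (lp.single 2 i (u i))) (M u) := M.hasSum hu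
  have h2 : HasSum (fun i : ℕ => M' (lp.single 2 i (u i))) (M' u) := M'.hasSum hu
  have : (fun i : ℕ => M (lp.single 2 i (u i))) = fun i => M' (lp.single 2 i (u i)) := by
    funext i
    have : lp.single (E := fun _ : ℕ => ℂ) 2 i (u i) = u i • e i := by
      rw [e, ← lp.single_smul]
      norm_num
    rw [this, map_smul, map_smul, hsingle]
  rw [this] at h1
  exact h1.unique h2


lemma memℓp_two_of {f : ℕ → ℂ} (h : Summable fun i => ‖f i‖ ^ 2) : Memℓp f 2 := by
  refine memℓp_gen ?_
  have h2 : (2 : ℝ≥0∞).toReal = ((2 : ℕ) : ℝ) := by norm_num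
  rw [h2]
  simpa [Real.rpow_natCast] using h

lemma norm_sq_eq (f : ellTwo) : ‖f‖ ^ 2 = ∑' i, ‖(f : ∀ _ : ℕ, ℂ) i‖ ^ 2 := by
  have h2 : (0:ℝ) < (2 : ℝ≥0∞).toReal := by norm_num
  have := lp.norm_rpow_eq_tsum h2 f
  have h3 : (2 : ℝ≥0∞).toReal = ((2 : ℕ) : ℝ) := by norm_num
  rw [h3] at this
  simpa [Real.rpow_natCast] using this

lemma summable_sq_of_memℓp (f : ellTwo) : Summable fun i => ‖(f : ∀ _ : ℕ, ℂ) i‖ ^ 2 := by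
  have := lp.memℓp f
  rw [memℓp_gen_iff (by norm_num : (0:ℝ) < (2 : ℝ≥0∞).toReal)] at this
  have h3 : (2 : ℝ≥0∞).toReal = ((2 : ℕ) : ℝ) := by norm_num
  rw [h3] at this
  simpa [Real.rpow_natCast] using this

section MatrixOp

variable (a : ℕ → ℕ → ℂ)

def rowvec (ha : Summable fun p : ℕ × ℕ => ‖a p.1 p.2‖ ^ 2) (i : ℕ) : ellTwo :=
  ⟨fun j => conj (a i j), memℓp_two_of (by
    simpa using ha.prod_factor i)⟩

lemma rowvec_normsq (ha : Summable fun p : ℕ × ℕ => ‖a p.1 p.2‖ ^ 2) (i : ℕ) :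
    ‖rowvec a ha i‖ ^ 2 = ∑' j, ‖a i j‖ ^ 2 := by
  rw [norm_sq_eq]
  simp [rowvec]

lemma summable_rownorms (ha : Summable fun p : ℕ × ℕ => ‖a p.1 p.2‖ ^ 2) :
    Summable fun i => ∑' j, ‖a i j‖ ^ 2 :=
  ((summable_prod_of_nonneg (fun _ => by positivity)).mp ha).2

lemma inner_rowvec (ha : Summable fun p : ℕ × ℕ => ‖a p.1 p.2‖ ^ 2) (i : ℕ) (u : ellTwo) :
    (inner ℂ (rowvec a ha i) u : ℂ) = ∑' j, a i j * (u : ∀ _ : ℕ, ℂ) j := by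
  rw [lp.inner_eq_tsum]
  simp [rowvec, RCLike.inner_apply]
  exact tsum_congr fun j => mul_comm _ _

def opAux (ha : Summable fun p : ℕ × ℕ => ‖a p.1 p.2‖ ^ 2) (u : ellTwo) : ellTwo :=
  ⟨fun i => (inner ℂ (rowvec a ha i) u : ℂ), by
    refine memℓp_two_of (Summable.of_nonneg_of_le (fun i => by positivity) (fun i => ?_)
      (((summable_rownorms a ha).mul_right (‖u‖ ^ 2)).congr (fun i => rfl)))
    calc ‖(inner ℂ (rowvec a ha i) u : ℂ)‖ ^ 2 ≤ (‖rowvec a ha i‖ * ‖u‖) ^ 2 := by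
          have := norm_inner_le_norm (𝕜 := ℂ) (rowvec a ha i) u
          exact pow_le_pow_left₀ (norm_nonneg _) this 2
      _ = (∑' j, ‖a i j‖ ^ 2) * ‖u‖ ^ 2 := by
          rw [mul_pow, rowvec_normsq]⟩

def op (ha : Summable fun p : ℕ × ℕ => ‖a p.1 p.2‖ ^ 2) : ellTwo →L[ℂ] ellTwo :=
  LinearMap.mkContinuous
    { toFun := opAux a ha
      map_add' := fun u w => by
        refine ellTwo_ext fun i => ?_
        simp [opAux, inner_add_right]
        rfl
      map_smul' := fun c u => by
        refine ellTwo_ext fun i => ?_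
        simp [opAux, inner_smul_right] }
    (Real.sqrt (∑' i, ∑' j, ‖a i j‖ ^ 2))
    (by
      intro u
      have hnn : (0:ℝ) ≤ ∑' i, ∑' j, ‖a i j‖ ^ 2 := tsum_nonneg fun i => tsum_nonneg fun j => by positivity
      have key : ‖opAux a ha u‖ ^ 2 ≤ (∑' i, ∑' j, ‖a i j‖ ^ 2) * ‖u‖ ^ 2 := by
        rw [norm_sq_eq]
        have hb : ∀ i, ‖((opAux a ha u : ∀ _ : ℕ, ℂ)) i‖ ^ 2
            ≤ (∑' j, ‖a i j‖ ^ 2) * ‖u‖ ^ 2 := by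
          intro i
          calc ‖(inner ℂ (rowvec a ha i) u : ℂ)‖ ^ 2 ≤ (‖rowvec a ha i‖ * ‖u‖) ^ 2 := by
                have := norm_inner_le_norm (𝕜 := ℂ) (rowvec a ha i) u
                exact pow_le_pow_left₀ (norm_nonneg _) this 2
            _ = (∑' j, ‖a i j‖ ^ 2) * ‖u‖ ^ 2 := by rw [mul_pow, rowvec_normsq]
        calc (∑' i, ‖((opAux a ha u : ∀ _ : ℕ, ℂ)) i‖ ^ 2)
            ≤ ∑' i, (∑' j, ‖a i j‖ ^ 2) * ‖u‖ ^ 2 := by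
              refine (summable_sq_of_memℓp _).tsum_le_tsum hb ?_
              exact (summable_rownorms a ha).mul_right _
          _ = (∑' i, ∑' j, ‖a i j‖ ^ 2) * ‖u‖ ^ 2 := by rw [tsum_mul_right]
      have h1 : ‖opAux a ha u‖ = Real.sqrt (‖opAux a ha u‖ ^ 2) := by
        rw [Real.sqrt_sq (norm_nonneg _)]
      show ‖opAux a ha u‖ ≤ _
      rw [h1]
      calc Real.sqrt (‖opAux a ha u‖ ^ 2) ≤ Real.sqrt ((∑' i, ∑' j, ‖a i j‖ ^ 2) * ‖u‖ ^ 2) :=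
            Real.sqrt_le_sqrt key
        _ = Real.sqrt (∑' i, ∑' j, ‖a i j‖ ^ 2) * ‖u‖ := by
            rw [Real.sqrt_mul hnn, Real.sqrt_sq (norm_nonneg _)])

lemma op_apply (ha : Summable fun p : ℕ × ℕ => ‖a p.1 p.2‖ ^ 2) (u : ellTwo) (i : ℕ) :
    ((op a ha u : ellTwo) : ∀ _ : ℕ, ℂ) i = ∑' j, a i j * (u : ∀ _ : ℕ, ℂ) j :=
  inner_rowvec a ha i u

lemma op_entry (ha : Summable fun p : ℕ × ℕ => ‖a p.1 p.2‖ ^ 2) (i j : ℕ) :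
    (inner ℂ (e i) (op a ha (e j)) : ℂ) = a i j := by
  rw [inner_e, op_apply]
  rw [tsum_eq_single j]
  · simp [e, lp.single_apply_self]
  · intro n hn
    simp [e, lp.single_apply_ne _ _ _ hn, Pi.single_apply, hn]

end MatrixOp

section OpAlg

lemma isPositive_mul_adjoint (A : ellTwo →L[ℂ] ellTwo) :
    (A * ContinuousLinearMap.adjoint A).IsPositive := by
  have h := (ContinuousLinearMap.isPositive_one (E := ellTwo) (𝕜 := ℂ)).conj_adjoint A
  simpa [ContinuousLinearMap.mul_def, ContinuousLinearMap.one_def] using h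

lemma isUnit_one_add_of_isPositive {T : ellTwo →L[ℂ] ellTwo} (hT : T.IsPositive) :
    IsUnit (1 + T) := by
  refine ContinuousLinearMap.isUnit_of_forall_le_norm_inner_map _ (c := 1) one_pos fun u => ?_
  have h2 : ‖u‖ ^ 2 ≤ RCLike.re (inner ℂ ((1 + T) u) u : ℂ) := by
    have h1 : ((1 + T) u) = u + T u := by
      simp [ContinuousLinearMap.add_apply]
    rw [h1, inner_add_left, map_add]
    have h3 : 0 ≤ RCLike.re (inner ℂ (T u) u) := (RCLike.nonneg_iff.mp (hT.inner_nonneg_left u)).1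
    have h4 : RCLike.re (inner ℂ u u : ℂ) = ‖u‖ ^ 2 := by
      rw [← @inner_self_eq_norm_sq ℂ]
    rw [h4]
    linarith
  calc ‖u‖ ^ 2 * ((1 : ℝ≥0) : ℝ) = ‖u‖ ^ 2 := by norm_num
    _ ≤ RCLike.re (inner ℂ ((1 + T) u) u : ℂ) := h2
    _ ≤ ‖(inner ℂ ((1 + T) u) u : ℂ)‖ := RCLike.re_le_norm _

lemma inverse_eq {R : Type*} [Ring R] {N B : R} (h : IsUnit N) (hb : N * B = 1) :
    Ring.inverse N = B := by
  calc Ring.inverse N = Ring.inverse N * (N * B) := by rw [hb, mul_one]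
    _ = (Ring.inverse N * N) * B := by rw [mul_assoc]
    _ = B := by rw [Ring.inverse_mul_cancel _ h, one_mul]

end OpAlg

section ConjOp

def Jfun (u : ellTwo) : ellTwo :=
  ⟨fun i => conj ((u : ∀ _ : ℕ, ℂ) i), memℓp_two_of (by simpa using summable_sq_of_memℓp u)⟩

lemma Jfun_apply (u : ellTwo) (i : ℕ) : (Jfun u : ∀ _ : ℕ, ℂ) i = conj ((u : ∀ _ : ℕ, ℂ) i) := rfl

lemma Jfun_Jfun (u : ellTwo) : Jfun (Jfun u) = u :=
  ellTwo_ext fun i => by simp [Jfun_apply]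

lemma Jfun_add (u w : ellTwo) : Jfun (u + w) = Jfun u + Jfun w :=
  ellTwo_ext fun i => by simp [Jfun_apply, lp.coeFn_add]

lemma Jfun_smul (c : ℂ) (u : ellTwo) : Jfun (c • u) = conj c • Jfun u :=
  ellTwo_ext fun i => by simp [Jfun_apply, lp.coeFn_smul]

lemma norm_Jfun (u : ellTwo) : ‖Jfun u‖ = ‖u‖ := by
  have h1 : ‖Jfun u‖ ^ 2 = ‖u‖ ^ 2 := by
    rw [norm_sq_eq, norm_sq_eq]
    simp [Jfun_apply]
  calc ‖Jfun u‖ = Real.sqrt (‖Jfun u‖ ^ 2) := by rw [Real.sqrt_sq (norm_nonneg _)]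
    _ = Real.sqrt (‖u‖ ^ 2) := by rw [h1]
    _ = ‖u‖ := Real.sqrt_sq (norm_nonneg _)

def conjOp (M : ellTwo →L[ℂ] ellTwo) : ellTwo →L[ℂ] ellTwo :=
  LinearMap.mkContinuous
    { toFun := fun u => Jfun (M (Jfun u))
      map_add' := fun u w => by
        show Jfun (M (Jfun (u + w))) = Jfun (M (Jfun u)) + Jfun (M (Jfun w))
        rw [Jfun_add, map_add, Jfun_add]
      map_smul' := fun c u => by
        show Jfun (M (Jfun (c • u))) = c • Jfun (M (Jfun u))
        rw [Jfun_smul, map_smul, Jfun_smul, Complex.conj_conj] }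
    ‖M‖ (fun u => by
      simp only [LinearMap.coe_mk, AddHom.coe_mk]
      rw [norm_Jfun]
      calc ‖M (Jfun u)‖ ≤ ‖M‖ * ‖Jfun u‖ := M.le_opNorm _
        _ = ‖M‖ * ‖u‖ := by rw [norm_Jfun])

lemma conjOp_apply (M : ellTwo →L[ℂ] ellTwo) (u : ellTwo) : conjOp M u = Jfun (M (Jfun u)) := rfl

lemma conjOp_one : conjOp 1 = (1 : ellTwo →L[ℂ] ellTwo) := by
  refine ContinuousLinearMap.ext fun u => ?_
  simp [conjOp_apply, Jfun_Jfun]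

lemma conjOp_mul (M N : ellTwo →L[ℂ] ellTwo) : conjOp (M * N) = conjOp M * conjOp N := by
  refine ContinuousLinearMap.ext fun u => ?_
  simp [conjOp_apply, ContinuousLinearMap.mul_apply, Jfun_Jfun]

lemma conjOp_add (M N : ellTwo →L[ℂ] ellTwo) : conjOp (M + N) = conjOp M + conjOp N := by
  refine ContinuousLinearMap.ext fun u => ?_
  simp [conjOp_apply, ContinuousLinearMap.add_apply, Jfun_add]

lemma conjOp_isUnit {M : ellTwo →L[ℂ] ellTwo} (h : IsUnit M) : IsUnit (conjOp M) := by
  obtain ⟨⟨n, b, hb1, hb2⟩, rfl⟩ := h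
  exact ⟨⟨conjOp n, conjOp b, by rw [← conjOp_mul, hb1, conjOp_one],
    by rw [← conjOp_mul, hb2, conjOp_one]⟩, rfl⟩

lemma conjOp_inverse {M : ellTwo →L[ℂ] ellTwo} (h : IsUnit M) :
    conjOp (Ring.inverse M) = Ring.inverse (conjOp M) := by
  refine (inverse_eq (conjOp_isUnit h) ?_).symm
  rw [← conjOp_mul, Ring.mul_inverse_cancel _ h, conjOp_one]

lemma Jfun_e (i : ℕ) : Jfun (e i) = e i := by
  refine ellTwo_ext fun n => ?_
  rw [Jfun_apply]
  show conj ((lp.single 2 i (1:ℂ) : ∀ _ : ℕ, ℂ) n) = ((lp.single 2 i (1:ℂ) : ∀ _ : ℕ, ℂ) n)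
  rcases eq_or_ne n i with h | h
  · subst h; rw [lp.single_apply_self]; simp
  · rw [lp.single_apply_ne _ _ _ h]; simp

lemma inner_e_Jfun (i : ℕ) (w : ellTwo) :
    (inner ℂ (e i) (Jfun w) : ℂ) = conj (inner ℂ (e i) w : ℂ) := by
  rw [inner_e, inner_e, Jfun_apply]

lemma conjOp_entry (M : ellTwo →L[ℂ] ellTwo) (i j : ℕ) :
    (inner ℂ (e i) (conjOp M (e j)) : ℂ) = conj (inner ℂ (e i) (M (e j)) : ℂ) := by
  rw [conjOp_apply, Jfun_e, inner_e_Jfun]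

lemma adjoint_entry (M : ellTwo →L[ℂ] ellTwo) (i j : ℕ) :
    (inner ℂ (e i) (ContinuousLinearMap.adjoint M (e j)) : ℂ) =
      conj (inner ℂ (e j) (M (e i)) : ℂ) := by
  rw [ContinuousLinearMap.adjoint_inner_right, ← inner_conj_symm]

end ConjOp

section Summability

def antiEquiv : (Σ m : ℕ, Fin (m + 1)) ≃ ℕ × ℕ where
  toFun q := ((q.2 : ℕ), q.1 - q.2)
  invFun p := ⟨p.1 + p.2, ⟨p.1, by omega⟩⟩
  left_inv q := by
    obtain ⟨m, k⟩ := q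
    have hk : (k : ℕ) ≤ m := Nat.lt_succ_iff.mp k.isLt
    refine Sigma.ext (by simpa using Nat.add_sub_cancel' hk) ?_
    rw [Fin.heq_ext_iff (by simpa using Nat.add_sub_cancel' hk)]
  right_inv p := by simp

lemma ksq (y : ℕ → ℂ) (hy : Summable fun m : ℕ => ((m : ℝ) + 1) * ‖y m‖ ^ 2) :
    Summable fun p : ℕ × ℕ => ‖y (p.1 + p.2)‖ ^ 2 := by
  rw [← antiEquiv.summable_iff]
  have hfib : (fun q : Σ m : ℕ, Fin (m + 1) =>
      ((fun p : ℕ × ℕ => ‖y (p.1 + p.2)‖ ^ 2) ∘ antiEquiv) q) =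
      fun q : Σ m : ℕ, Fin (m + 1) => ‖y q.1‖ ^ 2 := by
    funext q
    obtain ⟨m, k⟩ := q
    have hk : (k : ℕ) ≤ m := Nat.lt_succ_iff.mp k.isLt
    simp only [Function.comp_apply, antiEquiv, Equiv.coe_fn_mk]
    rw [Nat.add_sub_cancel' hk]
  have hs : Summable fun q : Σ m : ℕ, Fin (m + 1) => ‖y q.1‖ ^ 2 := by
    refine (summable_sigma_of_nonneg (fun q => by positivity)).mpr ⟨fun m => ?_, ?_⟩
    · exact Summable.of_finite
    · refine hy.congr fun m => ?_
      rw [tsum_fintype]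
      simp [Finset.sum_const, nsmul_eq_mul]
  exact hs.congr fun q => (congrFun hfib q).symm

end Summability

end Stmt9

open scoped ComplexConjugate
set_option maxHeartbeats 2000000

/-- Let `x : ℕ → ℂ` with `x₀ = 0` and `Σ n·|x_n|² < ∞`.  Then the sums
`K_{ij} = Σ_{n≥0} x_{i+n}·conj(x_{j+n})` converge absolutely, the matrices `(K_{ij})` and
`(K'_{ij}) = (K_{i+1,j+1})` define bounded positive operators `T, T'` on `ℓ²(ℕ)` (in the
sense that `⟨e_i, T e_j⟩ = K_{ij}` and `⟨e_i, T' e_j⟩ = K_{i+1,j+1}`), the operators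
`1 + T` and `1 + T'` are invertible, and with `v ∈ ℓ²` the vector `v_i = x_i` and `e₀` the
first standard basis vector, `⟨e₀, (1+T)⁻¹ e₀⟩ · (1 + ⟨v, (1+T')⁻¹ v⟩) = 1`. -/
theorem stmt9 (x : ℕ → ℂ) (hx0 : x 0 = 0)
    (hx : Summable fun n : ℕ => (n : ℝ) * ‖x n‖ ^ 2) :
    (∀ i j : ℕ, Summable fun n : ℕ => ‖x (i + n) * starRingEnd ℂ (x (j + n))‖) ∧
    ∃ T T' : ellTwo →L[ℂ] ellTwo,
      (∀ i j : ℕ,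
        (inner ℂ (lp.single 2 i (1 : ℂ)) (T (lp.single 2 j (1 : ℂ))) : ℂ) =
          ∑' n : ℕ, x (i + n) * starRingEnd ℂ (x (j + n))) ∧
      (∀ i j : ℕ,
        (inner ℂ (lp.single 2 i (1 : ℂ)) (T' (lp.single 2 j (1 : ℂ))) : ℂ) =
          ∑' n : ℕ, x (i + 1 + n) * starRingEnd ℂ (x (j + 1 + n))) ∧
      T.IsPositive ∧ T'.IsPositive ∧
      IsUnit (1 + T) ∧ IsUnit (1 + T') ∧
      ∀ v : ellTwo, (∀ i : ℕ, (v : ∀ _ : ℕ, ℂ) i = x i) →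
        (inner ℂ (lp.single 2 0 (1 : ℂ)) (Ring.inverse (1 + T) (lp.single 2 0 (1 : ℂ))) : ℂ) *
            (1 + (inner ℂ v (Ring.inverse (1 + T') v) : ℂ)) = 1 := by
  classical
  have h2 : Summable fun n : ℕ => ‖x n‖ ^ 2 := by
    have hsh : Summable fun n : ℕ => ‖x (n + 1)‖ ^ 2 := by
      refine Summable.of_nonneg_of_le (fun n => by positivity) (fun n => ?_)
        ((summable_nat_add_iff 1).mpr hx)
      have h1 : (1 : ℝ) ≤ ((n + 1 : ℕ) : ℝ) := by push_cast; linarith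
      nlinarith [sq_nonneg ‖x (n + 1)‖]
    exact (summable_nat_add_iff 1).mp hsh
  have hx1 : Summable fun m : ℕ => ((m : ℝ) + 1) * ‖x m‖ ^ 2 := by
    refine (hx.add h2).congr fun m => ?_
    ring
  have hx1' : Summable fun m : ℕ => ((m : ℝ) + 1) * ‖x (m + 1)‖ ^ 2 := by
    refine Summable.of_nonneg_of_le (fun m => by positivity) (fun m => ?_)
      ((summable_nat_add_iff 1).mpr hx1)
    have hnn : (0 : ℝ) ≤ ‖x (m + 1)‖ ^ 2 := by positivity
    push_cast
    nlinarith
  have hKa : Summable fun p : ℕ × ℕ => ‖x (p.1 + p.2)‖ ^ 2 := Stmt9.ksq x hx1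
  have hKa' : Summable fun p : ℕ × ℕ => ‖x (p.1 + p.2 + 1)‖ ^ 2 := Stmt9.ksq (fun n => x (n + 1)) hx1'
  have part1 : ∀ i j : ℕ, Summable fun n : ℕ => ‖x (i + n) * starRingEnd ℂ (x (j + n))‖ := by
    intro i j
    have hi : Summable fun n => ‖x (i + n)‖ ^ 2 :=
      ((summable_nat_add_iff i).mpr h2).congr fun n => by rw [add_comm]
    have hj : Summable fun n => ‖x (j + n)‖ ^ 2 :=
      ((summable_nat_add_iff j).mpr h2).congr fun n => by rw [add_comm]
    refine Summable.of_nonneg_of_le (fun n => norm_nonneg _) (fun n => ?_)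
      ((hi.add hj).mul_left (1 / 2 : ℝ))
    rw [norm_mul, RCLike.norm_conj]
    nlinarith [sq_nonneg (‖x (i + n)‖ - ‖x (j + n)‖), norm_nonneg (x (i + n)),
      norm_nonneg (x (j + n))]
  refine ⟨part1, ?_⟩
  set A : ellTwo →L[ℂ] ellTwo := Stmt9.op (fun i j => x (i + j)) hKa with hA
  set A' : ellTwo →L[ℂ] ellTwo := Stmt9.op (fun i j => x (i + j + 1)) hKa' with hA'
  set Ad : ellTwo →L[ℂ] ellTwo := ContinuousLinearMap.adjoint A with hAd
  set Ad' : ellTwo →L[ℂ] ellTwo := ContinuousLinearMap.adjoint A' with hAd'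
  -- coordinates
  have hAe : ∀ n j : ℕ, ((A (Stmt9.e j)) : ∀ _ : ℕ, ℂ) n = x (n + j) := fun n j => by
    rw [← Stmt9.inner_e, hA, Stmt9.op_entry]
  have hA'e : ∀ n j : ℕ, ((A' (Stmt9.e j)) : ∀ _ : ℕ, ℂ) n = x (n + j + 1) := fun n j => by
    rw [← Stmt9.inner_e, hA', Stmt9.op_entry]
  have hAde : ∀ n j : ℕ, ((Ad (Stmt9.e j)) : ∀ _ : ℕ, ℂ) n = conj (x (n + j)) := fun n j => by
    rw [← Stmt9.inner_e, hAd, Stmt9.adjoint_entry, hA, Stmt9.op_entry, add_comm j n]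
  have hAd'e : ∀ n j : ℕ, ((Ad' (Stmt9.e j)) : ∀ _ : ℕ, ℂ) n = conj (x (n + j + 1)) :=
    fun n j => by
    rw [← Stmt9.inner_e, hAd', Stmt9.adjoint_entry, hA', Stmt9.op_entry, add_comm j n]
  -- entries of T and T'
  have hTe : ∀ i j : ℕ, (inner ℂ (Stmt9.e i) ((A * Ad) (Stmt9.e j)) : ℂ) =
      ∑' n : ℕ, x (i + n) * conj (x (j + n)) := by
    intro i j
    have h1 : (inner ℂ (Stmt9.e i) ((A * Ad) (Stmt9.e j)) : ℂ) =
        (inner ℂ (Ad (Stmt9.e i)) (Ad (Stmt9.e j)) : ℂ) := by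
      rw [ContinuousLinearMap.mul_apply, hAd, ← ContinuousLinearMap.adjoint_inner_left]
    rw [h1, lp.inner_eq_tsum]
    refine tsum_congr fun n => ?_
    rw [RCLike.inner_apply, hAde, hAde, Complex.conj_conj, add_comm n i, add_comm n j, mul_comm]
  have hT'e : ∀ i j : ℕ, (inner ℂ (Stmt9.e i) ((A' * Ad') (Stmt9.e j)) : ℂ) =
      ∑' n : ℕ, x (i + 1 + n) * conj (x (j + 1 + n)) := by
    intro i j
    have h1 : (inner ℂ (Stmt9.e i) ((A' * Ad') (Stmt9.e j)) : ℂ) =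
        (inner ℂ (Ad' (Stmt9.e i)) (Ad' (Stmt9.e j)) : ℂ) := by
      rw [ContinuousLinearMap.mul_apply, hAd', ← ContinuousLinearMap.adjoint_inner_left]
    rw [h1, lp.inner_eq_tsum]
    refine tsum_congr fun n => ?_
    rw [RCLike.inner_apply, hAd'e, hAd'e, Complex.conj_conj]
    have e1 : n + i + 1 = i + 1 + n := by omega
    have e2 : n + j + 1 = j + 1 + n := by omega
    rw [e1, e2, mul_comm]
  -- the vector v and rank one operator
  set vv : ellTwo := ⟨x, Stmt9.memℓp_two_of h2⟩ with hvvdef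
  have hvv : ∀ i, (vv : ∀ _ : ℕ, ℂ) i = x i := fun i => rfl
  set q : ellTwo →L[ℂ] ellTwo := (innerSL ℂ vv).smulRight vv with hqdef
  have hqe : ∀ i j : ℕ, (inner ℂ (Stmt9.e i) (q (Stmt9.e j)) : ℂ) = x i * conj (x j) := by
    intro i j
    have h1 : q (Stmt9.e j) = (inner ℂ vv (Stmt9.e j) : ℂ) • vv := rfl
    have h3 : (inner ℂ vv (Stmt9.e j) : ℂ) = conj (x j) := by
      rw [← inner_conj_symm, Stmt9.inner_e, hvv]
    rw [h1, inner_smul_right, Stmt9.inner_e, hvv, h3]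
    ring
  -- T = T' + q
  have hq : A * Ad = A' * Ad' + q := by
    refine Stmt9.clm_ext_entries fun i j => ?_
    rw [hTe, ContinuousLinearMap.add_apply, inner_add_right, hT'e, hqe]
    have hsum : Summable fun n => x (i + n) * conj (x (j + n)) := (part1 i j).of_norm
    rw [hsum.tsum_eq_zero_add]
    have e0 : x (i + 0) * conj (x (j + 0)) = x i * conj (x j) := by norm_num
    have e3 : (∑' n : ℕ, x (i + (n + 1)) * conj (x (j + (n + 1)))) =
        ∑' n : ℕ, x (i + 1 + n) * conj (x (j + 1 + n)) := by
      refine tsum_congr fun n => ?_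
      have e1 : i + (n + 1) = i + 1 + n := by omega
      have e2 : j + (n + 1) = j + 1 + n := by omega
      rw [e1, e2]
    rw [e0, e3]
    ring
  -- positivity and invertibility
  have hTpos : (A * Ad).IsPositive := by rw [hAd]; exact Stmt9.isPositive_mul_adjoint A
  have hT'pos : (A' * Ad').IsPositive := by rw [hAd']; exact Stmt9.isPositive_mul_adjoint A'
  have hBpos : (Ad * A).IsPositive := by
    have := Stmt9.isPositive_mul_adjoint Ad
    rwa [hAd, ContinuousLinearMap.adjoint_adjoint] at this
  have hUnit : IsUnit (1 + A * Ad) := Stmt9.isUnit_one_add_of_isPositive hTpos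
  have hUnit' : IsUnit (1 + A' * Ad') := Stmt9.isUnit_one_add_of_isPositive hT'pos
  have hGu : IsUnit (1 + Ad * A) := Stmt9.isUnit_one_add_of_isPositive hBpos
  refine ⟨A * Ad, A' * Ad', hTe, hT'e, hTpos, hT'pos, hUnit, hUnit', ?_⟩
  intro v hv
  set R : ellTwo →L[ℂ] ellTwo := Ring.inverse (1 + A * Ad) with hR
  set R' : ellTwo →L[ℂ] ellTwo := Ring.inverse (1 + A' * Ad') with hR'
  set G : ellTwo →L[ℂ] ellTwo := Ring.inverse (1 + Ad * A) with hG
  have hveq : v = vv := Stmt9.ellTwo_ext fun i => by rw [hv i, hvv]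
  -- algebraic identity : Ad * R * A = 1 - G
  have comm : (1 + Ad * A) * Ad = Ad * (1 + A * Ad) := by noncomm_ring
  have hAdR : Ad * R = G * Ad := by
    calc Ad * R = (G * (1 + Ad * A)) * (Ad * R) := by
          rw [Ring.inverse_mul_cancel _ hGu, one_mul]
      _ = G * (((1 + Ad * A) * Ad) * R) := by
          rw [mul_assoc, ← mul_assoc (1 + Ad * A) Ad R]
      _ = G * ((Ad * (1 + A * Ad)) * R) := by rw [comm]
      _ = G * (Ad * ((1 + A * Ad) * R)) := by rw [mul_assoc Ad (1 + A * Ad) R]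
      _ = G * Ad := by rw [hR, Ring.mul_inverse_cancel _ hUnit, mul_one]
  have halg : Ad * R * A = 1 - G := by
    calc Ad * R * A = (G * Ad) * A := by rw [hAdR]
      _ = G * (Ad * A) := by rw [mul_assoc]
      _ = G * (1 + Ad * A) - G * 1 := by noncomm_ring
      _ = 1 - G := by rw [hG, Ring.inverse_mul_cancel _ hGu, mul_one]
  -- conjugation symmetry
  have hcA : Stmt9.conjOp A = Ad := by
    refine Stmt9.clm_ext_entries fun i j => ?_
    rw [Stmt9.conjOp_entry, hAd, Stmt9.adjoint_entry, hA, Stmt9.op_entry, Stmt9.op_entry,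
      add_comm i j]
  have hcAd : Stmt9.conjOp Ad = A := by
    refine Stmt9.clm_ext_entries fun i j => ?_
    rw [Stmt9.conjOp_entry, hAd, Stmt9.adjoint_entry, hA, Stmt9.op_entry, Stmt9.op_entry,
      Complex.conj_conj, add_comm i j]
  have hconjN : Stmt9.conjOp (1 + A * Ad) = 1 + Ad * A := by
    rw [Stmt9.conjOp_add, Stmt9.conjOp_one, Stmt9.conjOp_mul, hcA, hcAd]
  have hGR : (inner ℂ (Stmt9.e 0) (G (Stmt9.e 0)) : ℂ) =
      conj (inner ℂ (Stmt9.e 0) (R (Stmt9.e 0)) : ℂ) := by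
    have h1 : G = Stmt9.conjOp R := by
      rw [hR, Stmt9.conjOp_inverse hUnit, hconjN, hG]
    rw [h1, Stmt9.conjOp_entry]
  have hRsa : ContinuousLinearMap.adjoint R = R := by
    have hTsa : star (1 + A * Ad) = 1 + A * Ad := by
      rw [star_add, star_one, star_mul, ContinuousLinearMap.star_eq_adjoint,
        ContinuousLinearMap.star_eq_adjoint, ← hAd, ContinuousLinearMap.adjoint_adjoint]
    have h1 := Ring.inverse_star (1 + A * Ad)
    rw [hTsa] at h1
    rw [← ContinuousLinearMap.star_eq_adjoint, hR, ← h1]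
  have hreal : conj (inner ℂ (Stmt9.e 0) (R (Stmt9.e 0)) : ℂ) =
      (inner ℂ (Stmt9.e 0) (R (Stmt9.e 0)) : ℂ) := by
    have h1 : conj (inner ℂ (Stmt9.e 0) (R (Stmt9.e 0)) : ℂ) =
        (inner ℂ (R (Stmt9.e 0)) (Stmt9.e 0) : ℂ) := inner_conj_symm _ _
    rw [h1]
    conv_lhs => rw [← hRsa]
    rw [ContinuousLinearMap.adjoint_inner_left]
  -- c and the value of d
  set c : ℂ := (inner ℂ vv (R vv) : ℂ) with hc
  have hvA : vv = A (Stmt9.e 0) := by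
    refine Stmt9.ellTwo_ext fun i => ?_
    rw [hvv, hAe, Nat.add_zero]
  have hd : (inner ℂ (Stmt9.e 0) (R (Stmt9.e 0)) : ℂ) = 1 - c := by
    have h1 : c = (inner ℂ (Stmt9.e 0) ((Ad * R * A) (Stmt9.e 0)) : ℂ) := by
      rw [hc, hvA]
      rw [ContinuousLinearMap.mul_apply, ContinuousLinearMap.mul_apply, hAd,
        ContinuousLinearMap.adjoint_inner_right]
    have h2 : (inner ℂ (Stmt9.e 0) ((Ad * R * A) (Stmt9.e 0)) : ℂ) =
        1 - (inner ℂ (Stmt9.e 0) (G (Stmt9.e 0)) : ℂ) := by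
      rw [halg, ContinuousLinearMap.sub_apply, inner_sub_right, ContinuousLinearMap.one_apply,
        Stmt9.inner_e]
      congr 1
    rw [h1, h2, hGR, hreal]
    ring
  -- Sherman-Morrison step
  have h7 : (1 + A * Ad) = q + (1 + A' * Ad') := by rw [hq]; abel
  have hRR' : R' = R + R' * q * R := by
    calc R' = R' * ((1 + A * Ad) * R) := by
          rw [hR, Ring.mul_inverse_cancel _ hUnit, mul_one]
      _ = R' * ((q + (1 + A' * Ad')) * R) := by rw [h7]
      _ = R' * (1 + A' * Ad') * R + R' * q * R := by noncomm_ring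
      _ = R + R' * q * R := by rw [hR', Ring.inverse_mul_cancel _ hUnit', one_mul]
  have ht : (inner ℂ vv (R' vv) : ℂ) = c + c * (inner ℂ vv (R' vv) : ℂ) := by
    conv_lhs => rw [hRR']
    rw [ContinuousLinearMap.add_apply, inner_add_right, ← hc]
    congr 1
    have h9 : (R' * q * R) vv = R' (q (R vv)) := rfl
    have h10 : q (R vv) = (inner ℂ vv (R vv) : ℂ) • vv := by
      rw [hqdef]
      rfl
    rw [h9, h10, ← hc, map_smul, inner_smul_right]
  rw [hveq, hd]
  linear_combination ht

end
end

section
/- Let R be a (not necessarily commutative) ring with unit, let g₁, g₂, g₃, … ∈ R, set g₀ = 1, and let h_n := Σ over all compositions (i₁, …, i_l) of n of (−1)^l·g_{i₁}⋯g_{i_l} (with h₀ = 1) be the coefficients of the inverse power series. Then for every i ≥ 0 and j ≥ 1, Σ_{n=j}^{i+j} h_{i+j−n}·g_n = Σ over all compositions (i₁, …, i_l) of i+j with last part i_l ≥ j of (−1)^{l+1}·g_{i₁}·g_{i₂}·⋯·g_{i_l}. -/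
/-- The coefficients of the formal inverse of `Σ g_n zⁿ` (with `g 0 = 1`):
`h_0 = 1` and `h_n = Σ_{(i₁,…,i_l) composition of n} (−1)^l · g_{i₁}⋯g_{i_l}`. -/
noncomputable def invCoeff {R : Type*} [Ring R] (g : ℕ → R) : ℕ → R := fun n =>
  if n = 0 then 1
  else ∑ I : Composition n, (-1 : R) ^ I.length * (I.blocks.map g).prod

instance : Unique (Composition 0) where
  default := ⟨[], by simp, rfl⟩
  uniq I := by
    ext1
    have h2 : I.blocks = [] := by
      by_contra h
      have h1 := I.blocks_sum
      rcases List.exists_cons_of_ne_nil h with ⟨a, t, ht⟩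
      have ha := I.blocks_pos (ht ▸ (List.mem_cons_self : a ∈ a :: t))
      rw [ht, List.sum_cons] at h1
      omega
    simp [h2]

theorem invCoeff_eq {R : Type*} [Ring R] (g : ℕ → R) (m : ℕ) :
    invCoeff g m = ∑ I : Composition m, (-1 : R) ^ I.length * (I.blocks.map g).prod := by
  unfold invCoeff
  split
  · subst ‹m = 0›
    rw [Fintype.sum_unique]
    have hd : ∀ I : Composition 0, I.blocks = [] := fun I => by
      rcases h : I.blocks with _ | ⟨a, t⟩
      · rfl
      · have h1 := I.blocks_sum
        have ha := I.blocks_pos (h ▸ (List.mem_cons_self : a ∈ a :: t))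
        rw [h, List.sum_cons] at h1
        omega
    simp [Composition.length, hd]
  · rfl

theorem comp_blocks_ne_nil {k : ℕ} (hk : 0 < k) (J : Composition k) : J.blocks ≠ [] := by
  intro h
  have hs := J.blocks_sum
  rw [h, List.sum_nil] at hs
  omega

theorem heq_comp {X a a' : ℕ} (h : a = a') {b : Composition (X - a)}
    {b' : Composition (X - a')} (hb : b.blocks = b'.blocks) : HEq b b' := by
  subst h
  rw [heq_iff_eq]
  exact Composition.ext hb

/-- For every `i ≥ 0` and `j ≥ 1`,
`Σ_{n=j}^{i+j} h_{i+j−n}·g_n = Σ_{I composition of i+j, last part ≥ j} (−1)^{ℓ(I)+1} g_{i₁}⋯g_{i_l}`. -/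
theorem stmt15 {R : Type*} [Ring R] (g : ℕ → R) (hg0 : g 0 = 1) (i j : ℕ) (hj : 1 ≤ j) :
    ∑ n ∈ Finset.Icc j (i + j), invCoeff g (i + j - n) * g n =
      ∑ I : Composition (i + j),
        if j ≤ I.blocks.getLastD 0 then
          (-1 : R) ^ (I.length + 1) * (I.blocks.map g).prod
        else 0 := by
  have hij : 0 < i + j := by omega
  rw [← Finset.sum_filter]
  have hL : ∀ n ∈ Finset.Icc j (i + j), invCoeff g (i + j - n) * g n =
      ∑ I : Composition (i + j - n), (-1 : R) ^ I.length * (I.blocks.map g).prod * g n := by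
    intro n _
    rw [invCoeff_eq, Finset.sum_mul]
  rw [Finset.sum_congr rfl hL, Finset.sum_sigma']
  refine Finset.sum_bij'
    (fun p hp => (⟨p.2.blocks ++ [p.1],
      by
        intro x hx
        rcases List.mem_append.1 hx with h | h
        · exact p.2.blocks_pos h
        · simp at h; subst h
          have := (Finset.mem_sigma.1 hp).1
          rw [Finset.mem_Icc] at this
          omega,
      by
        have := (Finset.mem_sigma.1 hp).1
        rw [Finset.mem_Icc] at this
        rw [List.sum_append, p.2.blocks_sum, List.sum_cons, List.sum_nil]
        omega⟩ : Composition (i + j)))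
    (fun J hJ =>
      ⟨J.blocks.getLast (comp_blocks_ne_nil hij J),
       ⟨J.blocks.dropLast,
        by
          intro x hx
          exact J.blocks_pos (List.dropLast_subset _ hx),
        by
          have h1 : J.blocks.dropLast.sum + J.blocks.getLast (comp_blocks_ne_nil hij J)
              = i + j := by
            conv_rhs => rw [← J.blocks_sum,
              ← List.dropLast_concat_getLast (comp_blocks_ne_nil hij J)]
            rw [List.sum_append, List.sum_cons, List.sum_nil]
            simp
          omega⟩⟩)
    ?_ ?_ ?_ ?_ ?_
  · -- hi : forward lands in filter
    intro p hp
    rw [Finset.mem_filter]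
    refine ⟨Finset.mem_univ _, ?_⟩
    have := (Finset.mem_sigma.1 hp).1
    rw [Finset.mem_Icc] at this
    simpa [Composition.blocks] using this.1
  · -- hj : backward lands in sigma
    intro J hJ
    rw [Finset.mem_filter] at hJ
    rw [Finset.mem_sigma]
    refine ⟨?_, Finset.mem_univ _⟩
    rw [Finset.mem_Icc]
    constructor
    · have hne := comp_blocks_ne_nil hij J
      have : J.blocks.getLastD 0 = J.blocks.getLast hne := by
        rw [List.getLastD_eq_getLast?, List.getLast?_eq_getLast hne]
        rfl
      rw [this] at hJ
      exact hJ.2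
    · have hmem := List.getLast_mem (comp_blocks_ne_nil hij J)
      calc J.blocks.getLast _ ≤ J.blocks.sum :=
            List.single_le_sum (fun x _ => Nat.zero_le x) _ hmem
        _ = i + j := J.blocks_sum
  · -- left_inv
    intro p hp
    obtain ⟨n, I⟩ := p
    have h1 : (I.blocks ++ [n]).getLast (by simp) = n := List.getLast_concat
    refine Sigma.ext ?_ ?_
    · simpa using h1
    · exact heq_comp (by simpa using h1) (by simp [List.dropLast_concat])
  · -- right_inv
    intro J hJ
    exact Composition.ext (List.dropLast_concat_getLast (comp_blocks_ne_nil hij J))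
  · -- values
    intro p hp
    obtain ⟨n, I⟩ := p
    show (-1:R) ^ I.length * (I.blocks.map g).prod * g n =
      (-1) ^ ((I.blocks ++ [n]).length + 1) * ((I.blocks ++ [n]).map g).prod
    rw [List.length_append, List.map_append]
    simp only [List.length_cons, List.length_nil, List.map_cons, List.map_nil,
      List.prod_append, List.prod_cons, List.prod_nil, mul_one]
    rw [show I.blocks.length + 1 + 1 = I.blocks.length + 2 from rfl, pow_add,
      neg_one_sq, mul_one, mul_assoc]
end
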